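/- arXiv:1211.4999 — 4 statements merged into one kernel-verified Lean document; each statement's English description precedes it below -/
import Mathlib

section
/- For every nonempty set M ⊆ C and every k ∈ {1,…,m}, the M-signature coordinate satisfies p_M^{(k)} = ∑_{A⊆C, |M∖A|=k} ∑_{j∈M∖A} q_j(A)·Δ_jφ(A), and equivalently p_M^{(k)} = ∑_{j∈M} ∑_{A⊆C∖{j}, |M∖A|=k} q_j(A)·Δ_jφ(A). -/
open MeasureTheory Finset

/-- Lifetime of the (sub)system on component set `D` with structure function `χ`
(the maximum over the sets `A ⊆ D` with `χ A = 1` of `min_{i ∈ A} T i`). -/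
noncomputable def sysLifeOn {Ω : Type*} {n : ℕ} (T : Fin n → Ω → ℝ)
    (D : Finset (Fin n)) (χ : Finset (Fin n) → ℝ) (ω : Ω) : ℝ :=
  if h : (D.powerset.filter fun A => χ A = 1).Nonempty then
    (D.powerset.filter fun A => χ A = 1).sup' h
      (fun A => if hA : A.Nonempty then A.inf' hA fun i => T i ω else 0)
  else 0

/-- The `k`-th order statistic of the lifetimes `(T i)_{i ∈ M}`. -/
noncomputable def orderStat {Ω : Type*} {n : ℕ} (T : Fin n → Ω → ℝ)
    (M : Finset (Fin n)) (k : ℕ) (ω : Ω) : ℝ :=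
  ((M.val.map fun i => T i ω).sort (· ≤ ·)).getD (k - 1) 0

/-- The relative quality function `q_j(A) = Pr(max_{i ∈ C∖A} T_i = T_j < min_{i ∈ A} T_i)`. -/
noncomputable def relQual {Ω : Type*} [MeasurableSpace Ω] {n : ℕ} (μ : Measure Ω)
    (T : Fin n → Ω → ℝ) (j : Fin n) (A : Finset (Fin n)) : ℝ :=
  (μ {ω | (∀ i ∉ A, T i ω ≤ T j ω) ∧ ∀ i ∈ A, T j ω < T i ω}).toReal

section Aux

lemma count_aux {l : List ℝ} (hs : l.Pairwise (· < ·)) {i : ℕ} (hi : i < l.length) {x : ℝ}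
    (hx : l[i] = x) : (l.filter (· ≤ x)).length = i + 1 := by
  have hmono := hs.sortedLT.strictMono_get
  have hsplit := List.take_append_drop (i+1) l
  have htake : l.filter (fun a => decide (a ≤ x)) =
      (l.take (i+1)).filter (fun a => decide (a ≤ x)) ++
      (l.drop (i+1)).filter (fun a => decide (a ≤ x)) := by
    conv_lhs => rw [← hsplit]
    rw [List.filter_append]
  have h1 : (l.take (i+1)).filter (fun a => decide (a ≤ x)) = l.take (i+1) := by
    rw [List.filter_eq_self]
    intro a ha
    rcases List.mem_iff_getElem.1 ha with ⟨m, hm, rfl⟩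
    have hm' : m < i + 1 := lt_of_lt_of_le hm (by rw [List.length_take]; exact min_le_left _ _)
    rw [List.getElem_take]
    simp only [decide_eq_true_eq]
    have hmlen : m < l.length := by omega
    subst hx
    rcases Nat.lt_or_ge m i with h | h
    · exact le_of_lt (hmono (show (⟨m, hmlen⟩ : Fin l.length) < ⟨i, hi⟩ from h))
    · have : m = i := by omega
      subst this; exact le_refl _
  have h2 : (l.drop (i+1)).filter (fun a => decide (a ≤ x)) = [] := by
    rw [List.filter_eq_nil_iff]
    intro a ha
    rcases List.mem_iff_getElem.1 ha with ⟨m, hm, rfl⟩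
    rw [List.getElem_drop]
    simp only [decide_eq_true_eq, not_le]
    have hlen : i + 1 + m < l.length := by
      have := hm; rw [List.length_drop] at this; omega
    subst hx
    exact hmono (show (⟨i, hi⟩ : Fin l.length) < ⟨i+1+m, hlen⟩ from by simp; omega)
  show (l.filter (fun a => decide (a ≤ x))).length = i + 1
  rw [htake, h1, h2, List.length_append, List.length_take]
  simp; omega

lemma key_list {l : List ℝ} (hs : l.Pairwise (· < ·)) {i : ℕ} (hi : i < l.length) {x : ℝ} :
    l.getD i 0 = x ↔ x ∈ l ∧ (l.filter (· ≤ x)).length = i + 1 := by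
  rw [List.getD_eq_getElem l 0 hi]
  constructor
  · rintro rfl
    exact ⟨List.getElem_mem hi, count_aux hs hi rfl⟩
  · rintro ⟨hx, hcount⟩
    have hycount : (l.filter (· ≤ l[i])).length = i + 1 := count_aux hs hi rfl
    have hyl : l[i] ∈ l := List.getElem_mem hi
    by_contra hne
    have key : ∀ a b : ℝ, a ∈ l → b ∈ l → a < b →
        (l.filter (· ≤ a)).length < (l.filter (· ≤ b)).length := by
      intro a b ha hb hab
      have hsub : (l.filter (fun z => decide (z ≤ a))).Sublist
          (l.filter (fun z => decide (z ≤ b))) := by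
        apply List.monotone_filter_right
        intro z hz
        simp only [decide_eq_true_eq] at hz ⊢
        exact hz.trans (le_of_lt hab)
      rcases Nat.lt_or_ge (l.filter (fun z => decide (z ≤ a))).length
          (l.filter (fun z => decide (z ≤ b))).length with h | h
      · exact h
      · exfalso
        have heq := hsub.eq_of_length (le_antisymm hsub.length_le h)
        have hbmem : b ∈ l.filter (fun z => decide (z ≤ b)) := by
          rw [List.mem_filter]; exact ⟨hb, by simp⟩
        rw [← heq, List.mem_filter] at hbmem
        simp only [decide_eq_true_eq] at hbmem
        exact absurd hbmem.2 (not_le.mpr hab)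
    rcases lt_trichotomy l[i] x with h | h | h
    · have := key _ _ hyl hx h; omega
    · exact hne h
    · have := key _ _ hx hyl h; omega

lemma orderStat_eq_iff {Ω : Type*} {n : ℕ} (T : Fin n → Ω → ℝ) (M : Finset (Fin n))
    (k : ℕ) (hk1 : 1 ≤ k) (hkm : k ≤ M.card) (ω : Ω)
    (hd : ∀ i l : Fin n, i ≠ l → T i ω ≠ T l ω) (j : Fin n) :
    orderStat T M k ω = T j ω ↔ j ∈ M ∧ (M.filter fun i => T i ω ≤ T j ω).card = k := by
  set f : Fin n → ℝ := fun i => T i ω with hf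
  set s : Multiset ℝ := M.val.map f with hsdef
  have hnd : s.Nodup := by
    apply Multiset.Nodup.map_on _ M.nodup
    intro x hx y hy hxy
    by_contra hne
    exact hd x y hne hxy
  set l : List ℝ := s.sort (· ≤ ·) with hldef
  have hls : (↑l : Multiset ℝ) = s := Multiset.sort_eq s _
  have hlnd : l.Nodup := by rw [← Multiset.coe_nodup, hls]; exact hnd
  have hlsorted : l.Pairwise (· < ·) := ((Multiset.pairwise_sort s _).sortedLE.sortedLT_of_nodup hlnd).pairwise
  have hlen : l.length = M.card := by
    rw [hldef, Multiset.length_sort, hsdef, Multiset.card_map]; rfl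
  have hi : k - 1 < l.length := by omega
  have hmem : f j ∈ l ↔ j ∈ M := by
    rw [hldef, Multiset.mem_sort, hsdef, Multiset.mem_map]
    constructor
    · rintro ⟨i, hiM, hij⟩
      by_cases h : i = j
      · subst h; exact hiM
      · exact absurd hij (hd i j h)
    · intro hj; exact ⟨j, hj, rfl⟩
  have hcount : (l.filter (· ≤ f j)).length = (M.filter fun i => T i ω ≤ T j ω).card := by
    have h1 : ((l.filter (· ≤ f j) : List ℝ) : Multiset ℝ) = Multiset.filter (· ≤ f j) (↑l) := by
      simp [Multiset.filter_coe]
    have : Multiset.filter (· ≤ f j) s = Multiset.map f (Multiset.filter ((· ≤ f j) ∘ f) M.val) :=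
      Multiset.filter_map _ f M.val
    calc (l.filter (· ≤ f j)).length
        = Multiset.card ((l.filter (· ≤ f j) : List ℝ) : Multiset ℝ) := rfl
      _ = Multiset.card (Multiset.filter (· ≤ f j) s) := by rw [h1, hls]
      _ = Multiset.card (Multiset.filter ((· ≤ f j) ∘ f) M.val) := by rw [this, Multiset.card_map]
      _ = (M.filter fun i => T i ω ≤ T j ω).card := by
          simp only [Finset.card, Finset.filter]
          congr 1
  show l.getD (k-1) 0 = f j ↔ _
  rw [key_list hlsorted hi, hmem, hcount]
  have : k - 1 + 1 = k := by omega
  rw [this]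

lemma sysLife_eq {Ω : Type*} {n : ℕ} (T : Fin n → Ω → ℝ) (φ : Finset (Fin n) → ℝ)
    (hφmono : ∀ A B : Finset (Fin n), A ⊆ B → φ A ≤ φ B)
    (hφempty : φ ∅ = 0) (hφfull : φ Finset.univ = 1) (ω : Ω) (j : Fin n)
    (A : Finset (Fin n)) (hA : ∀ i, i ∈ A ↔ T j ω < T i ω)
    (hins : φ (insert j A) = 1) (h0 : φ A = 0) :
    sysLifeOn T Finset.univ φ ω = T j ω := by
  have hne : ((Finset.univ : Finset (Fin n)).powerset.filter (fun B => φ B = 1)).Nonempty :=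
    ⟨Finset.univ, by simp [hφfull]⟩
  rw [sysLifeOn, dif_pos hne]
  apply le_antisymm
  · apply Finset.sup'_le
    intro B hB
    rw [Finset.mem_filter] at hB
    have hB1 : φ B = 1 := hB.2
    have hBne : B.Nonempty := by
      rcases B.eq_empty_or_nonempty with h | h
      · rw [h, hφempty] at hB1; norm_num at hB1
      · exact h
    rw [dif_pos hBne]
    have : ∃ i ∈ B, T i ω ≤ T j ω := by
      by_contra h
      push_neg at h
      have hsub : B ⊆ A := fun i hi => (hA i).2 (h i hi)
      have := hφmono B A hsub
      rw [hB1, h0] at this; norm_num at this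
    obtain ⟨i, hiB, hile⟩ := this
    exact le_trans (Finset.inf'_le _ hiB) hile
  · have hmem : insert j A ∈
        (Finset.univ : Finset (Fin n)).powerset.filter (fun B => φ B = 1) := by
      rw [Finset.mem_filter]
      exact ⟨Finset.mem_powerset.2 (Finset.subset_univ _), hins⟩
    have hinf : (if hA' : (insert j A).Nonempty then (insert j A).inf' hA' (fun i => T i ω)
        else 0) = T j ω := by
      rw [dif_pos (Finset.insert_nonempty j A)]
      apply le_antisymm
      · exact Finset.inf'_le _ (Finset.mem_insert_self j A)
      · apply Finset.le_inf'
        intro i hi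
        rcases Finset.mem_insert.1 hi with rfl | hi
        · exact le_refl _
        · exact le_of_lt ((hA i).1 hi)
    calc T j ω = _ := hinf.symm
      _ ≤ _ := Finset.le_sup'
          (fun A => if hA : A.Nonempty then A.inf' hA fun i => T i ω else 0) hmem

lemma exists_drop {Ω : Type*} {n : ℕ} (T : Fin n → Ω → ℝ) (φ : Finset (Fin n) → ℝ)
    (hφ01 : ∀ A, φ A = 0 ∨ φ A = 1)
    (hφmono : ∀ A B : Finset (Fin n), A ⊆ B → φ A ≤ φ B)
    (hφempty : φ ∅ = 0) (hφfull : φ Finset.univ = 1) (ω : Ω) (i₀ : Fin n)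
    (hd : ∀ i l : Fin n, i ≠ l → T i ω ≠ T l ω) :
    ∃ j : Fin n, φ (insert j (Finset.univ.filter fun l => T j ω < T l ω)) = 1 ∧
      φ (Finset.univ.filter fun l => T j ω < T l ω) = 0 := by
  classical
  set A : Fin n → Finset (Fin n) := fun i => Finset.univ.filter (fun l => T i ω < T l ω)
    with hAdef
  set B : Fin n → Finset (Fin n) := fun i => Finset.univ.filter (fun l => T i ω ≤ T l ω)
    with hBdef
  have hBA : ∀ i, B i = insert i (A i) := by
    intro i
    ext l
    simp only [hBdef, hAdef, Finset.mem_filter, Finset.mem_univ, true_and, Finset.mem_insert]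
    constructor
    · intro h
      by_cases hli : l = i
      · exact Or.inl hli
      · exact Or.inr (lt_of_le_of_ne h (fun e => hd i l (fun e' => hli e'.symm) e))
    · rintro (rfl | h)
      · exact le_refl _
      · exact le_of_lt h
  set W : Finset (Fin n) := Finset.univ.filter (fun i => φ (B i) = 1) with hWdef
  have hWne : W.Nonempty := by
    obtain ⟨imin, _, hmin⟩ := Finset.exists_min_image Finset.univ (fun i => T i ω)
      ⟨i₀, Finset.mem_univ i₀⟩
    refine ⟨imin, ?_⟩
    rw [hWdef, Finset.mem_filter]
    refine ⟨Finset.mem_univ _, ?_⟩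
    have : B imin = Finset.univ := by
      rw [hBdef]
      ext l; simp only [Finset.mem_filter, Finset.mem_univ, true_and, iff_true]
      exact hmin l (Finset.mem_univ l)
    rw [this, hφfull]
  obtain ⟨j, hjW, hjmax⟩ := Finset.exists_max_image W (fun i => T i ω) hWne
  rw [hWdef, Finset.mem_filter] at hjW
  have hBj : φ (B j) = 1 := hjW.2
  have hAj : φ (A j) = 0 := by
    rcases hφ01 (A j) with h | h
    · exact h
    · exfalso
      have hAne : (A j).Nonempty := by
        rcases (A j).eq_empty_or_nonempty with he | hne
        · rw [he, hφempty] at h; norm_num at h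
        · exact hne
      obtain ⟨j', hj'A, hj'min⟩ := Finset.exists_min_image (A j) (fun i => T i ω) hAne
      have hsub : A j ⊆ B j' := by
        intro l hl
        rw [hBdef, Finset.mem_filter]
        exact ⟨Finset.mem_univ l, hj'min l hl⟩
      have h1 : φ (B j') = 1 := by
        rcases hφ01 (B j') with h' | h'
        · exfalso
          have := hφmono (A j) (B j') hsub
          rw [h, h'] at this; norm_num at this
        · exact h'
      have hj'W : j' ∈ W := by rw [hWdef, Finset.mem_filter]; exact ⟨Finset.mem_univ _, h1⟩
      have h2 : T j ω < T j' ω := by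
        have := hj'A; rw [hAdef] at this
        simpa using (Finset.mem_filter.1 this).2
      exact absurd (hjmax j' hj'W) (not_le.mpr h2)
  exact ⟨j, by rw [← hBA]; exact hBj, hAj⟩

end Aux

theorem stmt_0 {Ω : Type*} [MeasurableSpace Ω] (μ : Measure Ω) [IsProbabilityMeasure μ]
    {n : ℕ} (T : Fin n → Ω → ℝ) (hTmeas : ∀ i, Measurable (T i))
    (hTnonneg : ∀ i ω, 0 ≤ T i ω)
    (hties : ∀ i j : Fin n, i ≠ j → μ {ω | T i ω = T j ω} = 0)
    (φ : Finset (Fin n) → ℝ)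
    (hφ01 : ∀ A, φ A = 0 ∨ φ A = 1)
    (hφmono : ∀ A B : Finset (Fin n), A ⊆ B → φ A ≤ φ B)
    (hφempty : φ ∅ = 0) (hφfull : φ Finset.univ = 1)
    (M : Finset (Fin n)) (hM : M.Nonempty) (k : ℕ) (hk1 : 1 ≤ k) (hkm : k ≤ M.card) :
    (μ {ω | sysLifeOn T Finset.univ φ ω = orderStat T M k ω}).toReal =
      ∑ A ∈ (Finset.univ : Finset (Fin n)).powerset.filter (fun A => (M \ A).card = k),
        ∑ j ∈ M \ A, relQual μ T j A * (φ (insert j A) - φ A)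
    ∧
    (μ {ω | sysLifeOn T Finset.univ φ ω = orderStat T M k ω}).toReal =
      ∑ j ∈ M, ∑ A ∈ ((Finset.univ : Finset (Fin n)) \ {j}).powerset.filter
          (fun A => (M \ A).card = k),
        relQual μ T j A * (φ (insert j A) - φ A) := by
  classical
  obtain ⟨i₀, hi₀⟩ := hM
  -- the event sets
  set E : Fin n → Finset (Fin n) → Set Ω := fun j A =>
    {ω | (∀ i ∉ A, T i ω ≤ T j ω) ∧ ∀ i ∈ A, T j ω < T i ω} with hEdef
  -- the good set of no ties
  set G : Set Ω := {ω | ∀ i l : Fin n, i ≠ l → T i ω ≠ T l ω} with hGdef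
  have hGc : μ Gᶜ = 0 := by
    have hsub : Gᶜ ⊆ ⋃ i, ⋃ l, (if i = l then (∅ : Set Ω) else {ω | T i ω = T l ω}) := by
      intro ω hω
      rw [hGdef] at hω
      simp only [Set.mem_compl_iff, Set.mem_setOf_eq, not_forall] at hω
      obtain ⟨i, l, hil, hTil⟩ := hω
      simp only [Set.mem_iUnion]
      refine ⟨i, l, ?_⟩
      rw [if_neg hil]
      simpa using hTil
    refine measure_mono_null hsub ?_
    refine measure_iUnion_null fun i => measure_iUnion_null fun l => ?_
    by_cases h : i = l
    · simp [h]
    · rw [if_neg h]; exact hties i l h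
  have hmuG : ∀ s : Set Ω, μ s = μ (s ∩ G) := by
    intro s
    apply le_antisymm
    · calc μ s ≤ μ ((s ∩ G) ∪ Gᶜ) := measure_mono (fun ω hω => by
          by_cases h : ω ∈ G
          · exact Or.inl ⟨hω, h⟩
          · exact Or.inr h)
        _ ≤ μ (s ∩ G) + μ Gᶜ := measure_union_le _ _
        _ = μ (s ∩ G) := by rw [hGc, add_zero]
    · exact measure_mono Set.inter_subset_left
  have hEmeas : ∀ (j : Fin n) (A : Finset (Fin n)), MeasurableSet (E j A) := by
    intro j A
    have : E j A = (⋂ i ∈ Finset.univ.filter (· ∉ A), {ω | T i ω ≤ T j ω}) ∩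
        (⋂ i ∈ A, {ω | T j ω < T i ω}) := by
      ext ω
      simp only [hEdef, Set.mem_setOf_eq, Set.mem_inter_iff, Set.mem_iInter,
        Finset.mem_filter, Finset.mem_univ, true_and]
      try tauto
    rw [this]
    exact (MeasurableSet.biInter (Set.to_countable _)
        (fun i _ => measurableSet_le (hTmeas i) (hTmeas j))).inter
      (MeasurableSet.biInter (Set.to_countable _)
        (fun i _ => measurableSet_lt (hTmeas j) (hTmeas i)))
  -- pointwise characterization on G
  have hpoint : ∀ ω ∈ G,
      (sysLifeOn T Finset.univ φ ω = orderStat T M k ω ↔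
        ∃ j A, (M \ A).card = k ∧ j ∈ M ∧ j ∉ A ∧ φ (insert j A) = 1 ∧ φ A = 0 ∧
          ω ∈ E j A) := by
    intro ω hω
    rw [hGdef] at hω
    simp only [Set.mem_setOf_eq] at hω
    constructor
    · intro heq
      obtain ⟨j, hins, h0⟩ := exists_drop T φ hφ01 hφmono hφempty hφfull ω i₀ hω
      set A := Finset.univ.filter (fun l => T j ω < T l ω) with hAdef
      have hA : ∀ i, i ∈ A ↔ T j ω < T i ω := by
        intro i; simp [hAdef]
      have hsys : sysLifeOn T Finset.univ φ ω = T j ω :=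
        sysLife_eq T φ hφmono hφempty hφfull ω j A hA hins h0
      have hord : orderStat T M k ω = T j ω := by rw [← heq, hsys]
      obtain ⟨hjM, hcard⟩ := (orderStat_eq_iff T M k hk1 hkm ω hω j).1 hord
      have hMA : M \ A = M.filter (fun i => T i ω ≤ T j ω) := by
        ext i
        simp only [Finset.mem_sdiff, Finset.mem_filter, hA, not_lt]
      have hjA : j ∉ A := fun h => lt_irrefl _ ((hA j).1 h)
      refine ⟨j, A, by rw [hMA]; exact hcard, hjM, hjA, hins, h0, ?_⟩
      rw [hEdef]
      refine ⟨fun i hi => ?_, fun i hi => (hA i).1 hi⟩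
      by_contra h
      exact hi ((hA i).2 (not_le.1 h))
    · rintro ⟨j, A, hcard, hjM, hjA, hins, h0, hωE⟩
      rw [hEdef, Set.mem_setOf_eq] at hωE
      obtain ⟨h1, h2⟩ := hωE
      have hA : ∀ i, i ∈ A ↔ T j ω < T i ω := by
        intro i
        constructor
        · exact h2 i
        · intro h
          by_contra hiA
          exact absurd (h1 i hiA) (not_le.mpr h)
      have hsys : sysLifeOn T Finset.univ φ ω = T j ω :=
        sysLife_eq T φ hφmono hφempty hφfull ω j A hA hins h0
      have hMA : M \ A = M.filter (fun i => T i ω ≤ T j ω) := by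
        ext i
        simp only [Finset.mem_sdiff, Finset.mem_filter, hA, not_lt]
      have hord : orderStat T M k ω = T j ω :=
        (orderStat_eq_iff T M k hk1 hkm ω hω j).2 ⟨hjM, by rw [← hMA]; exact hcard⟩
      rw [hsys, hord]
  -- uniqueness of the pair on G
  have huniq : ∀ ω ∈ G, ∀ j A j' A', (M \ A).card = k → j ∈ M → ω ∈ E j A →
      (M \ A').card = k → j' ∈ M → ω ∈ E j' A' → j = j' ∧ A = A' := by
    intro ω hω j A j' A' hcard hjM hE hcard' hjM' hE'
    rw [hGdef] at hω
    simp only [Set.mem_setOf_eq] at hω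
    rw [hEdef, Set.mem_setOf_eq] at hE hE'
    have hA : ∀ i, i ∈ A ↔ T j ω < T i ω := fun i =>
      ⟨hE.2 i, fun h => by by_contra hiA; exact absurd (hE.1 i hiA) (not_le.mpr h)⟩
    have hA' : ∀ i, i ∈ A' ↔ T j' ω < T i ω := fun i =>
      ⟨hE'.2 i, fun h => by by_contra hiA; exact absurd (hE'.1 i hiA) (not_le.mpr h)⟩
    have hMA : M \ A = M.filter (fun i => T i ω ≤ T j ω) := by
      ext i; simp only [Finset.mem_sdiff, Finset.mem_filter, hA, not_lt]
    have hMA' : M \ A' = M.filter (fun i => T i ω ≤ T j' ω) := by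
      ext i; simp only [Finset.mem_sdiff, Finset.mem_filter, hA', not_lt]
    have hkey : ∀ a b : Fin n, a ∈ M → b ∈ M → T a ω < T b ω →
        (M.filter (fun i => T i ω ≤ T a ω)).card < (M.filter (fun i => T i ω ≤ T b ω)).card := by
      intro a b haM hbM hab
      apply Finset.card_lt_card
      rw [Finset.ssubset_iff_of_subset]
      · exact ⟨b, by simp [hbM], by simp [not_le.mpr hab]⟩
      · intro i hi
        rw [Finset.mem_filter] at hi ⊢
        exact ⟨hi.1, hi.2.trans (le_of_lt hab)⟩
    have hjj : j = j' := by
      by_contra hne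
      rcases lt_trichotomy (T j ω) (T j' ω) with h | h | h
      · have := hkey j j' hjM hjM' h
        rw [← hMA, ← hMA', hcard, hcard'] at this
        omega
      · exact hω j j' hne h
      · have := hkey j' j hjM' hjM h
        rw [← hMA, ← hMA', hcard, hcard'] at this
        omega
    subst hjj
    refine ⟨rfl, ?_⟩
    ext i
    rw [hA, hA']
  -- the index set
  set F : Finset (Finset (Fin n)) :=
    (Finset.univ : Finset (Fin n)).powerset.filter (fun A => (M \ A).card = k) with hFdef
  set S' : Finset ((_ : Finset (Fin n)) × Fin n) :=
    (F.sigma fun A => M \ A).filter (fun p => φ (insert p.2 p.1) = 1 ∧ φ p.1 = 0) with hS'def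
  have hS'mem : ∀ p : (_ : Finset (Fin n)) × Fin n, p ∈ S' ↔
      (M \ p.1).card = k ∧ p.2 ∈ M ∧ p.2 ∉ p.1 ∧ φ (insert p.2 p.1) = 1 ∧ φ p.1 = 0 := by
    intro p
    rw [hS'def, Finset.mem_filter, Finset.mem_sigma, hFdef, Finset.mem_filter,
      Finset.mem_sdiff]
    constructor
    · rintro ⟨⟨⟨_, h1⟩, h2, h3⟩, h4, h5⟩
      exact ⟨h1, h2, h3, h4, h5⟩
    · rintro ⟨h1, h2, h3, h4, h5⟩
      exact ⟨⟨⟨Finset.mem_powerset.2 (Finset.subset_univ _), h1⟩, h2, h3⟩, h4, h5⟩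
  -- the set identity
  have hset : {ω | sysLifeOn T Finset.univ φ ω = orderStat T M k ω} ∩ G =
      ⋃ p ∈ S', E p.2 p.1 ∩ G := by
    ext ω
    simp only [Set.mem_inter_iff, Set.mem_setOf_eq, Set.mem_iUnion]
    constructor
    · rintro ⟨heq, hωG⟩
      obtain ⟨j, A, hcard, hjM, hjA, hins, h0, hωE⟩ := (hpoint ω hωG).1 heq
      exact ⟨⟨A, j⟩, (hS'mem ⟨A, j⟩).2 ⟨hcard, hjM, hjA, hins, h0⟩, hωE, hωG⟩
    · rintro ⟨p, hp, hωE, hωG⟩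
      obtain ⟨hcard, hjM, hjA, hins, h0⟩ := (hS'mem p).1 hp
      exact ⟨(hpoint ω hωG).2 ⟨p.2, p.1, hcard, hjM, hjA, hins, h0, hωE⟩, hωG⟩
  -- disjointness
  have hdisj : (↑S' : Set ((_ : Finset (Fin n)) × Fin n)).PairwiseDisjoint
      (fun p => E p.2 p.1 ∩ G) := by
    intro p hp q hq hpq
    rw [Finset.mem_coe] at hp hq
    obtain ⟨hc1, hm1, _, _, _⟩ := (hS'mem p).1 hp
    obtain ⟨hc2, hm2, _, _, _⟩ := (hS'mem q).1 hq
    simp only [Function.onFun]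
    rw [Set.disjoint_left]
    rintro ω ⟨hE1, hG1⟩ ⟨hE2, _⟩
    obtain ⟨hj, hA⟩ := huniq ω hG1 p.2 p.1 q.2 q.1 hc1 hm1 hE1 hc2 hm2 hE2
    exact hpq (Sigma.ext hA (by rw [hj]))
  have hGmeas : MeasurableSet G := by
    have hGeq : G = ⋂ i, ⋂ l, (if i = l then (Set.univ : Set Ω)
        else {ω | T i ω < T l ω} ∪ {ω | T l ω < T i ω}) := by
      ext ω
      simp only [hGdef, Set.mem_setOf_eq, Set.mem_iInter]
      constructor
      · intro h i l
        by_cases hil : i = l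
        · simp [hil]
        · rw [if_neg hil]
          rcases lt_or_gt_of_ne (h i l hil) with h' | h'
          · exact Or.inl h'
          · exact Or.inr h'
      · intro h i l hil
        have := h i l
        rw [if_neg hil] at this
        rcases this with h' | h'
        · exact ne_of_lt h'
        · exact ne_of_gt h'
    rw [hGeq]
    refine MeasurableSet.iInter fun i => MeasurableSet.iInter fun l => ?_
    by_cases hil : i = l
    · simp [hil]
    · rw [if_neg hil]
      exact (measurableSet_lt (hTmeas i) (hTmeas l)).union
        (measurableSet_lt (hTmeas l) (hTmeas i))
  -- the measure computation
  have hmeasure : (μ {ω | sysLifeOn T Finset.univ φ ω = orderStat T M k ω}).toReal =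
      ∑ p ∈ S', relQual μ T p.2 p.1 := by
    rw [hmuG _, hset, measure_biUnion_finset hdisj
      (fun p _ => (hEmeas p.2 p.1).inter hGmeas)]
    rw [ENNReal.toReal_sum (fun p _ => measure_ne_top μ _)]
    apply Finset.sum_congr rfl
    intro p _
    rw [← hmuG (E p.2 p.1)]
    rfl
  -- the first sum identity
  have hsum1 : ∑ A ∈ F, ∑ j ∈ M \ A, relQual μ T j A * (φ (insert j A) - φ A) =
      ∑ p ∈ S', relQual μ T p.2 p.1 := by
    rw [← Finset.sum_sigma F (fun A => M \ A)
      (fun p => relQual μ T p.2 p.1 * (φ (insert p.2 p.1) - φ p.1))]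
    rw [hS'def, Finset.sum_filter]
    apply Finset.sum_congr rfl
    intro p _
    by_cases h : φ (insert p.2 p.1) = 1 ∧ φ p.1 = 0
    · rw [if_pos h, h.1, h.2]
      ring
    · rw [if_neg h]
      have hmono := hφmono p.1 (insert p.2 p.1) (Finset.subset_insert _ _)
      have : φ (insert p.2 p.1) - φ p.1 = 0 := by
        rcases hφ01 p.1 with h1 | h1 <;> rcases hφ01 (insert p.2 p.1) with h2 | h2
        · rw [h1, h2]; ring
        · exact absurd ⟨h2, h1⟩ h
        · exfalso; rw [h1, h2] at hmono; norm_num at hmono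
        · rw [h1, h2]; ring
      rw [this, mul_zero]
  constructor
  · rw [hmeasure, ← hsum1, hFdef]
  · rw [hmeasure, ← hsum1]
    rw [Finset.sum_comm' (s := F) (t := fun A => M \ A) (t' := M)
      (s' := fun j => ((Finset.univ : Finset (Fin n)) \ {j}).powerset.filter
        (fun A => (M \ A).card = k))]
    intro A j
    rw [hFdef]
    simp only [Finset.mem_filter, Finset.mem_powerset, Finset.mem_sdiff,
      Finset.subset_sdiff, Finset.disjoint_singleton_right, Finset.mem_singleton]
    constructor
    · rintro ⟨⟨_, h1⟩, h2, h3⟩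
      exact ⟨⟨⟨Finset.subset_univ _, h3⟩, h1⟩, h2⟩
    · rintro ⟨⟨⟨_, h3⟩, h1⟩, h2⟩
      exact ⟨⟨Finset.subset_univ _, h1⟩, h2, h3⟩
end

section
/- For every nonempty set M ⊆ C, Pr(T_C = T_j for some j ∈ M) = ∑_{A⊆C} ∑_{j∈M∖A} q_j(A)·Δ_jφ(A). -/
open MeasureTheory Finset

section Aux

variable {Ω : Type*} {n : ℕ} (T : Fin n → Ω → ℝ) (φ : Finset (Fin n) → ℝ)

/-- set of components strictly alive after `T j ω` -/
noncomputable def Aset (ω : Ω) (j : Fin n) : Finset (Fin n) := univ.filter fun i => T j ω < T i ω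

/-- set of components alive at `T j ω` (weakly) -/
noncomputable def Bset (ω : Ω) (j : Fin n) : Finset (Fin n) := univ.filter fun i => T j ω ≤ T i ω

variable {T φ}

lemma work_nonempty (hφempty : φ ∅ = 0) {A : Finset (Fin n)} (hA : φ A = 1) :
    A.Nonempty := by
  rcases A.eq_empty_or_nonempty with h | h
  · exfalso; rw [h, hφempty] at hA; norm_num at hA
  · exact h

lemma work_of_le (hφ01 : ∀ A, φ A = 0 ∨ φ A = 1)
    (hφmono : ∀ A B : Finset (Fin n), A ⊆ B → φ A ≤ φ B)
    {A B : Finset (Fin n)} (hAB : A ⊆ B) (hA : φ A = 1) : φ B = 1 := by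
  rcases hφ01 B with h | h
  · have := hφmono _ _ hAB; rw [hA, h] at this; linarith
  · exact h

lemma key_exists
    (hφ01 : ∀ A, φ A = 0 ∨ φ A = 1)
    (hφmono : ∀ A B : Finset (Fin n), A ⊆ B → φ A ≤ φ B)
    (hφempty : φ ∅ = 0) (hφfull : φ (univ : Finset (Fin n)) = 1) (ω : Ω) :
    ∃ j : Fin n, φ (Aset T ω j) = 0 ∧ φ (Bset T ω j) = 1 ∧
      sysLifeOn T Finset.univ φ ω = T j ω := by
  have hne : (univ : Finset (Fin n)).Nonempty := by
    rcases (univ : Finset (Fin n)).eq_empty_or_nonempty with h | h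
    · exfalso; rw [h, hφempty] at hφfull; norm_num at hφfull
    · exact h
  obtain ⟨j0, _, hj0⟩ := Finset.exists_min_image univ (fun i => T i ω) hne
  have hB0 : φ (Bset T ω j0) = 1 := by
    have : Bset T ω j0 = univ := by
      apply Finset.filter_true_of_mem
      intro i hi; exact hj0 i hi
    rw [this, hφfull]
  set J := univ.filter (fun j => φ (Bset T ω j) = 1) with hJ
  have hJne : J.Nonempty := ⟨j0, mem_filter.2 ⟨mem_univ _, hB0⟩⟩
  obtain ⟨jh, hjhJ, hjhmax⟩ := Finset.exists_max_image J (fun j => T j ω) hJne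
  have hB : φ (Bset T ω jh) = 1 := (mem_filter.1 hjhJ).2
  have hA : φ (Aset T ω jh) = 0 := by
    rcases hφ01 (Aset T ω jh) with h | h
    · exact h
    exfalso
    obtain ⟨j', hj'A, hj'min⟩ :=
      Finset.exists_min_image (Aset T ω jh) (fun i => T i ω) (work_nonempty hφempty h)
    have hsub : Aset T ω jh ⊆ Bset T ω j' := fun i hi =>
      mem_filter.2 ⟨mem_univ _, hj'min i hi⟩
    have hBj' : φ (Bset T ω j') = 1 := work_of_le hφ01 hφmono hsub h
    have h1 := hjhmax j' (mem_filter.2 ⟨mem_univ _, hBj'⟩)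
    have h2 : T jh ω < T j' ω := (mem_filter.1 hj'A).2
    linarith
  refine ⟨jh, hA, hB, ?_⟩
  have hs : ((univ : Finset (Fin n)).powerset.filter fun A => φ A = 1).Nonempty :=
    ⟨univ, mem_filter.2 ⟨mem_powerset.2 (Finset.Subset.refl _), hφfull⟩⟩
  rw [sysLifeOn, dif_pos hs]
  apply le_antisymm
  · apply Finset.sup'_le
    intro A hAmem
    have hAw : φ A = 1 := (mem_filter.1 hAmem).2
    have hAne : A.Nonempty := work_nonempty hφempty hAw
    rw [dif_pos hAne]
    obtain ⟨j', hj'A, hj'min⟩ := Finset.exists_min_image A (fun i => T i ω) hAne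
    have hsub : A ⊆ Bset T ω j' := fun i hi => mem_filter.2 ⟨mem_univ _, hj'min i hi⟩
    have hBj' : φ (Bset T ω j') = 1 := work_of_le hφ01 hφmono hsub hAw
    have h1 := hjhmax j' (mem_filter.2 ⟨mem_univ _, hBj'⟩)
    exact le_trans (Finset.inf'_le _ hj'A) h1
  · have hBne : (Bset T ω jh).Nonempty := ⟨jh, mem_filter.2 ⟨mem_univ _, le_refl _⟩⟩
    have hBmem : Bset T ω jh ∈ (univ : Finset (Fin n)).powerset.filter fun A => φ A = 1 :=
      mem_filter.2 ⟨mem_powerset.2 (Finset.subset_univ _), hB⟩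
    have h1 : T jh ω ≤ (fun A => if hA : A.Nonempty then A.inf' hA fun i => T i ω else 0)
        (Bset T ω jh) := by
      simp only [dif_pos hBne]
      apply Finset.le_inf'
      intro i hi; exact (mem_filter.1 hi).2
    exact le_trans h1 (Finset.le_sup'
      (f := fun A => if hA : A.Nonempty then A.inf' hA fun i => T i ω else 0) hBmem)

lemma key_unique
    (hφmono : ∀ A B : Finset (Fin n), A ⊆ B → φ A ≤ φ B) {ω : Ω}
    (hd : ∀ i j : Fin n, i ≠ j → T i ω ≠ T j ω) {j j' : Fin n}
    (hA : φ (Aset T ω j) = 0) (hB : φ (Bset T ω j) = 1)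
    (hA' : φ (Aset T ω j') = 0) (hB' : φ (Bset T ω j') = 1) : j = j' := by
  rcases lt_trichotomy (T j ω) (T j' ω) with h | h | h
  · exfalso
    have hsub : Bset T ω j' ⊆ Aset T ω j := fun i hi =>
      mem_filter.2 ⟨mem_univ _, lt_of_lt_of_le h (mem_filter.1 hi).2⟩
    have := hφmono _ _ hsub
    rw [hB', hA] at this; linarith
  · by_contra hne; exact hd j j' hne h
  · exfalso
    have hsub : Bset T ω j ⊆ Aset T ω j' := fun i hi =>
      mem_filter.2 ⟨mem_univ _, lt_of_lt_of_le h (mem_filter.1 hi).2⟩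
    have := hφmono _ _ hsub
    rw [hB, hA'] at this; linarith

lemma insert_Aset {ω : Ω} (hd : ∀ i j : Fin n, i ≠ j → T i ω ≠ T j ω) (j : Fin n) :
    insert j (Aset T ω j) = Bset T ω j := by
  ext i
  simp only [Finset.mem_insert, Aset, Bset, mem_filter, mem_univ, true_and]
  constructor
  · rintro (rfl | h)
    · exact le_refl _
    · exact le_of_lt h
  · intro h
    rcases eq_or_ne i j with rfl | hne
    · exact Or.inl rfl
    · exact Or.inr (lt_of_le_of_ne h (fun e => hd i j hne e.symm))

end Aux

theorem stmt_2 {Ω : Type*} [MeasurableSpace Ω] (μ : Measure Ω) [IsProbabilityMeasure μ]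
    {n : ℕ} (T : Fin n → Ω → ℝ) (hTmeas : ∀ i, Measurable (T i))
    (hTnonneg : ∀ i ω, 0 ≤ T i ω)
    (hties : ∀ i j : Fin n, i ≠ j → μ {ω | T i ω = T j ω} = 0)
    (φ : Finset (Fin n) → ℝ)
    (hφ01 : ∀ A, φ A = 0 ∨ φ A = 1)
    (hφmono : ∀ A B : Finset (Fin n), A ⊆ B → φ A ≤ φ B)
    (hφempty : φ ∅ = 0) (hφfull : φ Finset.univ = 1)
    (M : Finset (Fin n)) (hM : M.Nonempty) :
    (μ {ω | ∃ j ∈ M, sysLifeOn T Finset.univ φ ω = T j ω}).toReal =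
      ∑ A ∈ (Finset.univ : Finset (Fin n)).powerset,
        ∑ j ∈ M \ A, relQual μ T j A * (φ (insert j A) - φ A) := by
  classical
  -- the null set of ties
  set N : Set Ω := ⋃ i, ⋃ j, ⋃ (_ : i ≠ j), {ω | T i ω = T j ω} with hN
  have hNnull : μ N = 0 :=
    measure_iUnion_null fun i => measure_iUnion_null fun j =>
      measure_iUnion_null fun h => hties i j h
  have hdist : ∀ ω, ω ∉ N → ∀ i j : Fin n, i ≠ j → T i ω ≠ T j ω := by
    intro ω hω i j hij heq
    exact hω (Set.mem_iUnion.2 ⟨i, Set.mem_iUnion.2 ⟨j, Set.mem_iUnion.2 ⟨hij, heq⟩⟩⟩)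
  -- the relQual events
  set S : Fin n → Finset (Fin n) → Set Ω := fun j A =>
    {ω | (∀ i ∉ A, T i ω ≤ T j ω) ∧ ∀ i ∈ A, T j ω < T i ω} with hS
  have hSmeas : ∀ j A, MeasurableSet (S j A) := by
    intro j A
    have : S j A = (⋂ i, ⋂ (_ : i ∉ A), {ω | T i ω ≤ T j ω}) ∩
        (⋂ i, ⋂ (_ : i ∈ A), {ω | T j ω < T i ω}) := by
      ext ω; simp [hS, Set.mem_iInter]
    rw [this]
    exact (MeasurableSet.iInter fun i => MeasurableSet.iInter fun _ =>
        measurableSet_le (hTmeas i) (hTmeas j)).inter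
      (MeasurableSet.iInter fun i => MeasurableSet.iInter fun _ =>
        measurableSet_lt (hTmeas j) (hTmeas i))
  -- the index set of good pairs
  set P : Finset (Finset (Fin n) × Fin n) :=
    ((Finset.univ : Finset (Fin n)).powerset ×ˢ M).filter
      (fun p => p.2 ∉ p.1 ∧ φ p.1 = 0 ∧ φ (insert p.2 p.1) = 1) with hP
  -- characterization of membership in S
  have hchar : ∀ (ω : Ω) (j : Fin n) (A : Finset (Fin n)), ω ∈ S j A → j ∉ A →
      A = Aset T ω j := by
    intro ω j A hω hjA
    ext i
    simp only [Aset, mem_filter, mem_univ, true_and]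
    constructor
    · exact fun hi => hω.2 i hi
    · intro hlt; by_contra hiA; exact absurd (hω.1 i hiA) (not_le.2 hlt)
  have hkey2 : ∀ ω, ω ∉ N → ∀ (A : Finset (Fin n)) (j : Fin n), j ∉ A → φ A = 0 →
      φ (insert j A) = 1 → ω ∈ S j A →
      A = Aset T ω j ∧ sysLifeOn T Finset.univ φ ω = T j ω := by
    intro ω hωN A j hjA h0 h1 hωS
    have hd := hdist ω hωN
    have hAeq := hchar ω j A hωS hjA
    have hA0 : φ (Aset T ω j) = 0 := hAeq ▸ h0
    have hB1 : φ (Bset T ω j) = 1 := by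
      rw [← insert_Aset hd j, ← hAeq]; exact h1
    refine ⟨hAeq, ?_⟩
    obtain ⟨jh, hAjh, hBjh, hsys⟩ := key_exists hφ01 hφmono hφempty hφfull (T := T) ω
    have hjjh : j = jh := key_unique hφmono hd hA0 hB1 hAjh hBjh
    rw [hjjh]; exact hsys
  -- the event on the LHS, off the tie set, is the disjoint union of good events
  have hEU : {ω | ∃ j ∈ M, sysLifeOn T Finset.univ φ ω = T j ω} \ N =
      ⋃ p ∈ P, (S p.2 p.1 \ N) := by
    ext ω
    constructor
    · rintro ⟨hωE, hωN⟩
      obtain ⟨j, hjM, hsys⟩ := hωE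
      have hd := hdist ω hωN
      obtain ⟨jh, hAjh, hBjh, hsysjh⟩ := key_exists hφ01 hφmono hφempty hφfull (T := T) ω
      have heq : T j ω = T jh ω := by rw [← hsys, ← hsysjh]
      have hjjh : j = jh := by
        by_contra hne; exact hd j jh hne heq
      subst hjjh
      have hjnA : j ∉ Aset T ω j := by simp [Aset]
      have hωS : ω ∈ S j (Aset T ω j) := by
        constructor
        · intro i hi
          exact le_of_not_gt fun hlt => hi (mem_filter.2 ⟨mem_univ _, hlt⟩)
        · intro i hi; exact (mem_filter.1 hi).2
      refine Set.mem_iUnion₂.2 ⟨(Aset T ω j, j), ?_, hωS, hωN⟩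
      refine mem_filter.2 ⟨mem_product.2 ⟨mem_powerset.2 (filter_subset _ _), hjM⟩,
        hjnA, hAjh, ?_⟩
      rw [insert_Aset hd j]; exact hBjh
    · intro hω
      obtain ⟨p, hpP, hωS, hωN⟩ := Set.mem_iUnion₂.1 hω
      obtain ⟨hp1, hp2, hp3, hp4⟩ := mem_filter.1 hpP
      obtain ⟨_, hsys⟩ := hkey2 ω hωN p.1 p.2 hp2 hp3 hp4 hωS
      exact ⟨⟨p.2, (mem_product.1 hp1).2, hsys⟩, hωN⟩
  -- pairwise disjointness
  have hdisj : Set.PairwiseDisjoint (↑P) (fun p : Finset (Fin n) × Fin n =>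
      S p.2 p.1 \ N) := by
    intro p hp q hq hpq
    simp only [Function.onFun]
    rw [Set.disjoint_left]
    rintro ω ⟨hωSp, hωN⟩ ⟨hωSq, _⟩
    obtain ⟨hp1, hp2, hp3, hp4⟩ := mem_filter.1 hp
    obtain ⟨hq1, hq2, hq3, hq4⟩ := mem_filter.1 hq
    have hd := hdist ω hωN
    have hAp := hchar ω p.2 p.1 hωSp hp2
    have hAq := hchar ω q.2 q.1 hωSq hq2
    have hBp : φ (Bset T ω p.2) = 1 := by rw [← insert_Aset hd p.2, ← hAp]; exact hp4
    have hBq : φ (Bset T ω q.2) = 1 := by rw [← insert_Aset hd q.2, ← hAq]; exact hq4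
    have hjj : p.2 = q.2 := key_unique hφmono hd (hAp ▸ hp3) hBp (hAq ▸ hq3) hBq
    exact hpq (Prod.ext (by rw [hAp, hAq, hjj]) hjj)
  -- measure computation
  have hmeas : ∀ p ∈ P, MeasurableSet (S p.2 p.1 \ N) := by
    intro p _
    refine (hSmeas p.2 p.1).diff ?_
    exact MeasurableSet.iUnion fun i => MeasurableSet.iUnion fun j =>
      MeasurableSet.iUnion fun _ => measurableSet_eq_fun (hTmeas i) (hTmeas j)
  have hμE : μ {ω | ∃ j ∈ M, sysLifeOn T Finset.univ φ ω = T j ω} =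
      ∑ p ∈ P, μ (S p.2 p.1) := by
    rw [← measure_diff_null hNnull, hEU, measure_biUnion_finset hdisj hmeas]
    exact Finset.sum_congr rfl fun p _ => measure_diff_null hNnull
  rw [hμE, ENNReal.toReal_sum (fun p _ => measure_ne_top μ _)]
  -- reorganize the sum
  rw [hP, Finset.sum_filter, Finset.sum_product]
  apply Finset.sum_congr rfl
  intro A hA
  rw [Finset.sdiff_eq_filter, Finset.sum_filter]
  apply Finset.sum_congr rfl
  intro j hj
  by_cases hjA : j ∉ A
  · rw [if_pos hjA]
    have hq : relQual μ T j A = (μ (S j A)).toReal := rfl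
    rcases hφ01 A with h0 | h1
    · rcases hφ01 (insert j A) with hi0 | hi1
      · rw [if_neg (by simp [hi0]), hi0, h0]; ring
      · rw [if_pos ⟨hjA, h0, hi1⟩, hi1, h0, hq]; ring
    · have hi1 : φ (insert j A) = 1 :=
        work_of_le hφ01 hφmono (Finset.subset_insert _ _) h1
      rw [if_neg (by simp [h1]), h1, hi1]; ring
  · rw [if_neg (by tauto), if_neg hjA]
end

section
/- For every nonempty set M ⊆ C and every k ∈ {1,…,m}, p_M^{(k)} = ∑_{A⊆C, |M∩A|≤m−k+1} d(A)·Pr(T_{k:M} = min_{i∈A} T_i), and equivalently p_M^{(k)} = ∑_{A⊆C} d(A)·Pr(T_{k:M} = min_{i∈A} T_i). -/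
open MeasureTheory Finset

/-- `min_{i ∈ A} T i` (with junk value `0` when `A = ∅`). -/
noncomputable def minLifeOn {Ω : Type*} {n : ℕ} (T : Fin n → Ω → ℝ)
    (A : Finset (Fin n)) (ω : Ω) : ℝ :=
  if h : A.Nonempty then A.inf' h fun i => T i ω else 0

/-- The signed domination function `d(A) = ∑_{B ⊆ A} (-1)^{|A|-|B|} φ(B)`. -/
noncomputable def signedDom {n : ℕ} (φ : Finset (Fin n) → ℝ) (A : Finset (Fin n)) : ℝ :=
  ∑ B ∈ A.powerset, (-1 : ℝ) ^ (A.card - B.card) * φ B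


lemma aux_neg_one_pow_sum {α : Type*} [DecidableEq α] (x : Finset α) :
    ∑ D ∈ x.powerset, (-1 : ℝ) ^ D.card = if x = ∅ then 1 else 0 := by
  have h := Finset.sum_powerset_neg_one_pow_card (x := x)
  apply_fun (fun z : ℤ => (z : ℝ)) at h
  push_cast at h
  simpa using h

lemma signedDom_empty {n : ℕ} (φ : Finset (Fin n) → ℝ) : signedDom φ ∅ = φ ∅ := by
  simp [signedDom]

lemma sum_signedDom {n : ℕ} (φ : Finset (Fin n) → ℝ) (B : Finset (Fin n)) :
    ∑ A ∈ B.powerset, signedDom φ A = φ B := by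
  classical
  unfold signedDom
  rw [Finset.sum_comm' (s := B.powerset) (t := fun A => A.powerset) (t' := B.powerset)
      (s' := fun A' => B.powerset.filter fun A => A' ⊆ A)
      (fun A A' => by
        simp only [Finset.mem_powerset, Finset.mem_filter]
        exact ⟨fun ⟨h1, h2⟩ => ⟨⟨h1, h2⟩, h2.trans h1⟩, fun ⟨⟨h1, h2⟩, _⟩ => ⟨h1, h2⟩⟩)]
  have hinner : ∀ A' ∈ B.powerset,
      (∑ A ∈ B.powerset.filter fun A => A' ⊆ A, (-1 : ℝ) ^ (A.card - A'.card) * φ A')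
        = (if A' = B then 1 else 0) * φ A' := by
    intro A' hA'
    rw [Finset.mem_powerset] at hA'
    rw [← Finset.sum_mul]
    congr 1
    have hbij : (∑ A ∈ B.powerset.filter fun A => A' ⊆ A, (-1 : ℝ) ^ (A.card - A'.card))
        = ∑ D ∈ (B \ A').powerset, (-1 : ℝ) ^ D.card := by
      refine Finset.sum_nbij' (i := fun A => A \ A') (j := fun D => A' ∪ D) ?_ ?_ ?_ ?_ ?_
      · intro A hA
        rw [Finset.mem_filter, Finset.mem_powerset] at hA
        exact Finset.mem_powerset.2 (Finset.sdiff_subset_sdiff hA.1 Finset.Subset.rfl)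
      · intro D hD
        rw [Finset.mem_powerset] at hD
        rw [Finset.mem_filter, Finset.mem_powerset]
        exact ⟨Finset.union_subset hA' (hD.trans (Finset.sdiff_subset)),
          Finset.subset_union_left⟩
      · intro A hA
        rw [Finset.mem_filter, Finset.mem_powerset] at hA
        exact Finset.union_sdiff_of_subset hA.2
      · intro D hD
        rw [Finset.mem_powerset] at hD
        exact Finset.union_sdiff_cancel_left (Finset.disjoint_sdiff.mono_right hD)
      · intro A hA
        rw [Finset.mem_filter, Finset.mem_powerset] at hA
        rw [Finset.card_sdiff_of_subset hA.2]
    rw [hbij, aux_neg_one_pow_sum]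
    refine if_congr ?_ rfl rfl
    rw [Finset.sdiff_eq_empty_iff_subset]
    exact ⟨fun h => le_antisymm hA' h, fun h => h ▸ Finset.Subset.rfl⟩
  rw [Finset.sum_congr rfl hinner]
  simp only [ite_mul, one_mul, zero_mul]
  rw [Finset.sum_ite_eq' B.powerset B φ]
  simp

lemma sorted_getElem_le_iff {l : List ℝ} (hl : l.Pairwise (· ≤ ·)) {j : ℕ} (hj : j < l.length)
    (c : ℝ) : l[j] ≤ c ↔ j + 1 ≤ l.countP (fun x => decide (x ≤ c)) := by
  constructor
  · intro h
    have h1 : (l.take (j + 1)).countP (fun x => decide (x ≤ c)) = (l.take (j + 1)).length := by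
      rw [List.countP_eq_length]
      intro x hx
      obtain ⟨i, hi, rfl⟩ := List.mem_iff_getElem.1 hx
      have hi' : i ≤ j := by
        have := hi; rw [List.length_take] at this; omega
      rw [List.getElem_take]
      simpa using le_trans (hl.rel_get_of_le (a := ⟨i, by omega⟩) (b := ⟨j, hj⟩) hi') h
    have h2 : (l.take (j + 1)).length = j + 1 := by
      rw [List.length_take]; omega
    calc j + 1 = (l.take (j + 1)).countP (fun x => decide (x ≤ c)) := by rw [h1, h2]
      _ ≤ l.countP (fun x => decide (x ≤ c)) := by
          conv_rhs => rw [← List.take_append_drop (j + 1) l]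
          rw [List.countP_append]; omega
  · intro h
    by_contra hc
    push_neg at hc
    have hdrop : (l.drop j).countP (fun x => decide (x ≤ c)) = 0 := by
      rw [List.countP_eq_zero]
      intro x hx
      obtain ⟨i, hi, rfl⟩ := List.mem_iff_getElem.1 hx
      rw [List.getElem_drop]
      have hji : j ≤ j + i := Nat.le_add_right _ _
      have hlt : j + i < l.length := by rw [List.length_drop] at hi; omega
      have := hl.rel_get_of_le (a := ⟨j, hj⟩) (b := ⟨j + i, hlt⟩) hji
      simp only [decide_eq_true_eq]
      intro hxc
      exact absurd (le_trans this hxc) (not_le.2 hc)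
    have htake : (l.take j).countP (fun x => decide (x ≤ c)) ≤ j := by
      calc (l.take j).countP _ ≤ (l.take j).length := List.countP_le_length
        _ ≤ j := by rw [List.length_take]; omega
    have : l.countP (fun x => decide (x ≤ c)) ≤ j := by
      conv_lhs => rw [← List.take_append_drop j l]
      rw [List.countP_append, hdrop]
      omega
    omega


section OS
variable {Ω : Type*} {n : ℕ} (T : Fin n → Ω → ℝ) (M : Finset (Fin n)) {k : ℕ}

lemma orderStat_eq_getElem (hk1 : 1 ≤ k) (hkm : k ≤ M.card) (ω : Ω) :
    ∃ hlt : k - 1 < ((M.val.map fun i => T i ω).sort (· ≤ ·)).length,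
      orderStat T M k ω = ((M.val.map fun i => T i ω).sort (· ≤ ·))[k - 1] := by
  have hlen : ((M.val.map fun i => T i ω).sort (· ≤ ·)).length = M.card := by
    rw [Multiset.length_sort, Multiset.card_map]; rfl
  have hlt : k - 1 < ((M.val.map fun i => T i ω).sort (· ≤ ·)).length := by
    rw [hlen]; omega
  exact ⟨hlt, List.getD_eq_getElem _ _ hlt⟩

lemma orderStat_mem (hk1 : 1 ≤ k) (hkm : k ≤ M.card) (ω : Ω) :
    ∃ i ∈ M, orderStat T M k ω = T i ω := by
  obtain ⟨hlt, heq⟩ := orderStat_eq_getElem T M hk1 hkm ω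
  have hmem : ((M.val.map fun i => T i ω).sort (· ≤ ·))[k-1] ∈
      ((M.val.map fun i => T i ω).sort (· ≤ ·)) := List.getElem_mem _
  rw [Multiset.mem_sort] at hmem
  obtain ⟨i, hi, hEq⟩ := Multiset.mem_map.1 hmem
  exact ⟨i, hi, by rw [heq, hEq]⟩

lemma countP_sort_eq [DecidableEq (Fin n)] (ω : Ω) (c : ℝ) :
    ((M.val.map fun i => T i ω).sort (· ≤ ·)).countP (fun x => decide (x ≤ c))
      = (M.filter fun i => T i ω ≤ c).card := by
  classical
  have h1 : ((M.val.map fun i => T i ω).sort (· ≤ ·)).countP (fun x => decide (x ≤ c))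
      = Multiset.countP (fun x => x ≤ c) (M.val.map fun i => T i ω) := by
    rw [← Multiset.coe_countP, Multiset.sort_eq]
  rw [h1, Multiset.countP_map]
  rw [Finset.card_def, Finset.filter_val]

lemma orderStat_le_iff (hk1 : 1 ≤ k) (hkm : k ≤ M.card) (ω : Ω) (c : ℝ) :
    orderStat T M k ω ≤ c ↔ k ≤ (M.filter fun i => T i ω ≤ c).card := by
  classical
  obtain ⟨hlt, heq⟩ := orderStat_eq_getElem T M hk1 hkm ω
  rw [heq, sorted_getElem_le_iff (Multiset.pairwise_sort _ _) hlt, countP_sort_eq]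
  omega

lemma measurable_orderStat [MeasurableSpace Ω] (hTmeas : ∀ i, Measurable (T i))
    (hk1 : 1 ≤ k) (hkm : k ≤ M.card) : Measurable (orderStat T M k) := by
  classical
  apply measurable_of_Iic
  intro c
  have hset : orderStat T M k ⁻¹' Set.Iic c
      = {ω | (k : ℝ) ≤ ∑ i ∈ M, if T i ω ≤ c then (1 : ℝ) else 0} := by
    ext ω
    simp only [Set.mem_preimage, Set.mem_Iic, Set.mem_setOf_eq,
      orderStat_le_iff T M hk1 hkm ω c, Finset.card_filter]
    rw [← Nat.cast_le (α := ℝ)]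
    push_cast
    rfl
  rw [hset]
  have hg : Measurable fun ω => ∑ i ∈ M, if T i ω ≤ c then (1 : ℝ) else 0 :=
    Finset.measurable_sum _ fun i _ =>
      Measurable.ite (measurableSet_le (hTmeas i) measurable_const)
        measurable_const measurable_const
  exact measurableSet_le measurable_const hg

end OS

lemma measurable_finset_inf' {Ω ι : Type*} [MeasurableSpace Ω] {s : Finset ι} (hs : s.Nonempty)
    {f : ι → Ω → ℝ} (hf : ∀ i, Measurable (f i)) :
    Measurable fun ω => s.inf' hs fun i => f i ω := by
  induction hs using Finset.Nonempty.cons_induction with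
  | singleton a => simpa using hf a
  | cons a s h hs ih => simp only [Finset.inf'_cons (H := hs)]; exact (hf a).min ih

lemma measurable_finset_sup' {Ω ι : Type*} [MeasurableSpace Ω] {s : Finset ι} (hs : s.Nonempty)
    {f : ι → Ω → ℝ} (hf : ∀ i, Measurable (f i)) :
    Measurable fun ω => s.sup' hs fun i => f i ω := by
  induction hs using Finset.Nonempty.cons_induction with
  | singleton a => simpa using hf a
  | cons a s h hs ih => simp only [Finset.sup'_cons (H := hs)]; exact (hf a).max ih

section Sys
variable {Ω : Type*} {n : ℕ} (T : Fin n → Ω → ℝ) (φ : Finset (Fin n) → ℝ)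

lemma measurable_minOn [MeasurableSpace Ω] (hTmeas : ∀ i, Measurable (T i))
    (A : Finset (Fin n)) : Measurable (minLifeOn T A) := by
  unfold minLifeOn
  by_cases hA : A.Nonempty
  · simp only [dif_pos hA]
    exact measurable_finset_inf' hA hTmeas
  · simp only [dif_neg hA]
    exact measurable_const

lemma measurable_sysLifeOn [MeasurableSpace Ω] (hTmeas : ∀ i, Measurable (T i))
    (D : Finset (Fin n)) : Measurable (sysLifeOn T D φ) := by
  by_cases hF : (D.powerset.filter fun A => φ A = 1).Nonempty
  · have : sysLifeOn T D φ = fun ω =>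
        (D.powerset.filter fun A => φ A = 1).sup' hF fun A => minLifeOn T A ω := by
      funext ω; simp only [sysLifeOn, dif_pos hF]; rfl
    rw [this]
    exact measurable_finset_sup' hF fun A => measurable_minOn T hTmeas A
  · have : sysLifeOn T D φ = fun _ => 0 := by
      funext ω; simp only [sysLifeOn, dif_neg hF]
    rw [this]; exact measurable_const

variable (hφ01 : ∀ A, φ A = 0 ∨ φ A = 1)
  (hφmono : ∀ A B : Finset (Fin n), A ⊆ B → φ A ≤ φ B)
  (hφempty : φ ∅ = 0) (hφfull : φ Finset.univ = 1)

include hφfull in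
lemma filterNonempty : ((Finset.univ : Finset (Fin n)).powerset.filter fun A => φ A = 1).Nonempty :=
  ⟨Finset.univ, by simp [hφfull]⟩

include hφempty in
lemma mem_filter_nonempty {A : Finset (Fin n)}
    (hA : A ∈ (Finset.univ : Finset (Fin n)).powerset.filter fun A => φ A = 1) : A.Nonempty := by
  rcases A.eq_empty_or_nonempty with rfl | h
  · rw [Finset.mem_filter] at hA
    rw [hφempty] at hA
    exact absurd hA.2 (by norm_num)
  · exact h

include hφ01 hφmono hφempty hφfull in
lemma surv_eq (ω : Ω) (u : ℝ) :
    (if u < sysLifeOn T Finset.univ φ ω then (1 : ℝ) else 0)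
      = φ (Finset.univ.filter fun i => u < T i ω) := by
  classical
  have hF := filterNonempty φ hφfull (n := n)
  have hiff : u < sysLifeOn T Finset.univ φ ω ↔
      φ (Finset.univ.filter fun i => u < T i ω) = 1 := by
    rw [sysLifeOn, dif_pos hF, Finset.lt_sup'_iff]
    constructor
    · rintro ⟨A, hA, hu⟩
      have hAne : A.Nonempty := mem_filter_nonempty φ hφempty hA
      rw [dif_pos hAne, Finset.lt_inf'_iff] at hu
      have hsub : A ⊆ Finset.univ.filter fun i => u < T i ω := fun i hi =>
        Finset.mem_filter.2 ⟨Finset.mem_univ _, hu i hi⟩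
      have h1 : (1 : ℝ) ≤ φ (Finset.univ.filter fun i => u < T i ω) := by
        have := hφmono A _ hsub
        rw [Finset.mem_filter] at hA
        linarith [hA.2 ▸ this]
      rcases hφ01 (Finset.univ.filter fun i => u < T i ω) with h | h
      · rw [h] at h1; linarith
      · exact h
    · intro h1
      refine ⟨Finset.univ.filter fun i => u < T i ω, ?_, ?_⟩
      · exact Finset.mem_filter.2 ⟨Finset.mem_powerset.2 (Finset.subset_univ _), h1⟩
      · have hne : (Finset.univ.filter fun i => u < T i ω).Nonempty := by
          rcases Finset.eq_empty_or_nonempty (Finset.univ.filter fun i => u < T i ω) with h | h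
          · rw [h, hφempty] at h1; exact absurd h1 (by norm_num)
          · exact h
        rw [dif_pos hne, Finset.lt_inf'_iff]
        exact fun i hi => (Finset.mem_filter.1 hi).2
  rcases hφ01 (Finset.univ.filter fun i => u < T i ω) with h | h
  · rw [h, if_neg]
    rw [hiff, h]; norm_num
  · rw [h, if_pos (hiff.2 h)]

lemma minOn_ind {A : Finset (Fin n)} (hA : A.Nonempty) (ω : Ω) (u : ℝ) :
    (if u < minLifeOn T A ω then (1 : ℝ) else 0)
      = if A ⊆ Finset.univ.filter (fun i => u < T i ω) then 1 else 0 := by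
  classical
  refine if_congr ?_ rfl rfl
  rw [minLifeOn, dif_pos hA, Finset.lt_inf'_iff]
  simp [Finset.subset_iff]

include hφ01 hφmono hφempty hφfull in
lemma surv_sum (ω : Ω) (u : ℝ) :
    (if u < sysLifeOn T Finset.univ φ ω then (1 : ℝ) else 0)
      = ∑ A ∈ (Finset.univ : Finset (Fin n)).powerset,
          signedDom φ A * (if u < minLifeOn T A ω then 1 else 0) := by
  classical
  rw [surv_eq T φ hφ01 hφmono hφempty hφfull ω u]
  rw [← sum_signedDom φ (Finset.univ.filter fun i => u < T i ω)]
  have hterm : ∀ A ∈ (Finset.univ : Finset (Fin n)).powerset,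
      signedDom φ A * (if u < minLifeOn T A ω then (1 : ℝ) else 0)
        = if A ⊆ Finset.univ.filter (fun i => u < T i ω) then signedDom φ A else 0 := by
    intro A _
    rcases A.eq_empty_or_nonempty with rfl | hA
    · rw [signedDom_empty, hφempty]
      simp
    · rw [minOn_ind T hA, mul_ite, mul_one, mul_zero]
  rw [Finset.sum_congr rfl hterm, ← Finset.sum_filter]
  congr 1
  ext A
  simp only [Finset.mem_filter, Finset.mem_powerset]
  exact ⟨fun h => ⟨Finset.subset_univ _, h⟩, fun h => h.2⟩

include hφempty hφfull in
lemma sys_mem_range (ω : Ω) : ∃ i, sysLifeOn T Finset.univ φ ω = T i ω := by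
  classical
  have hF := filterNonempty φ hφfull (n := n)
  obtain ⟨A, hA, hEq⟩ := Finset.exists_mem_eq_sup' hF
    (fun A => if hA : A.Nonempty then A.inf' hA fun i => T i ω else 0)
  have hAne : A.Nonempty := mem_filter_nonempty φ hφempty hA
  obtain ⟨i, hi, hEq2⟩ := Finset.exists_mem_eq_inf' hAne (fun i => T i ω)
  refine ⟨i, ?_⟩
  rw [sysLifeOn, dif_pos hF, hEq, dif_pos hAne, hEq2]

lemma minOn_mem {A : Finset (Fin n)} (hA : A.Nonempty) (ω : Ω) :
    ∃ i ∈ A, minLifeOn T A ω = T i ω := by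
  obtain ⟨i, hi, hEq⟩ := Finset.exists_mem_eq_inf' hA (fun i => T i ω)
  exact ⟨i, hi, by rw [minLifeOn, dif_pos hA, hEq]⟩

end Sys

section Key
variable {Ω : Type*} {n : ℕ} (T : Fin n → Ω → ℝ) (φ : Finset (Fin n) → ℝ)
  (hφ01 : ∀ A, φ A = 0 ∨ φ A = 1)
  (hφmono : ∀ A B : Finset (Fin n), A ⊆ B → φ A ≤ φ B)
  (hφempty : φ ∅ = 0) (hφfull : φ Finset.univ = 1)

include hφ01 hφmono hφempty hφfull in
lemma pointwise_key (M : Finset (Fin n)) {k : ℕ} (hk1 : 1 ≤ k)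
    (hkm : k ≤ M.card) (ω : Ω) :
    (if sysLifeOn T Finset.univ φ ω = orderStat T M k ω then (1 : ℝ) else 0)
      = ∑ A ∈ (Finset.univ : Finset (Fin n)).powerset,
          signedDom φ A * (if orderStat T M k ω = minLifeOn T A ω then (1 : ℝ) else 0) := by
  classical
  set s := orderStat T M k ω with hs
  set Vs := Finset.univ.filter (fun i => T i ω < s) with hVs
  set u₀ := if h : Vs.Nonempty then Vs.sup' h (fun i => T i ω) else s - 1 with hu₀def
  have hu₀ : u₀ < s := by
    rw [hu₀def]
    split
    · next h => exact (Finset.sup'_lt_iff h).2 fun i hi => (Finset.mem_filter.1 hi).2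
    · linarith
  have claim : ∀ x : ℝ, (∃ i, x = T i ω) →
      (if x = s then (1 : ℝ) else 0)
        = (if u₀ < x then (1 : ℝ) else 0) - (if s < x then (1 : ℝ) else 0) := by
    rintro x ⟨i, rfl⟩
    rcases lt_trichotomy (T i ω) s with h | h | h
    · have hmem : i ∈ Vs := Finset.mem_filter.2 ⟨Finset.mem_univ _, h⟩
      have hx : T i ω ≤ u₀ := by
        rw [hu₀def, dif_pos ⟨i, hmem⟩]
        exact Finset.le_sup' (fun i => T i ω) hmem
      rw [if_neg (ne_of_lt h), if_neg (not_lt.2 hx), if_neg (not_lt.2 h.le)]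
      ring
    · rw [if_pos h, if_pos (lt_of_lt_of_le hu₀ h.ge), if_neg (not_lt.2 h.le)]
      ring
    · rw [if_neg h.ne', if_pos (hu₀.trans h), if_pos h]
      ring
  have hsysr := sys_mem_range T φ hφempty hφfull ω
  calc (if sysLifeOn T Finset.univ φ ω = s then (1 : ℝ) else 0)
      = (if u₀ < sysLifeOn T Finset.univ φ ω then (1 : ℝ) else 0)
        - (if s < sysLifeOn T Finset.univ φ ω then (1 : ℝ) else 0) := claim _ hsysr
    _ = (∑ A ∈ (Finset.univ : Finset (Fin n)).powerset,
            signedDom φ A * (if u₀ < minLifeOn T A ω then (1 : ℝ) else 0))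
        - ∑ A ∈ (Finset.univ : Finset (Fin n)).powerset,
            signedDom φ A * (if s < minLifeOn T A ω then (1 : ℝ) else 0) := by
          rw [surv_sum T φ hφ01 hφmono hφempty hφfull ω u₀,
            surv_sum T φ hφ01 hφmono hφempty hφfull ω s]
    _ = ∑ A ∈ (Finset.univ : Finset (Fin n)).powerset, signedDom φ A *
          ((if u₀ < minLifeOn T A ω then (1 : ℝ) else 0)
            - (if s < minLifeOn T A ω then (1 : ℝ) else 0)) := by
          rw [← Finset.sum_sub_distrib]
          exact Finset.sum_congr rfl fun A _ => by ring
    _ = ∑ A ∈ (Finset.univ : Finset (Fin n)).powerset,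
          signedDom φ A * (if s = minLifeOn T A ω then (1 : ℝ) else 0) := by
          refine Finset.sum_congr rfl fun A _ => ?_
          rcases A.eq_empty_or_nonempty with rfl | hA
          · rw [signedDom_empty, hφempty]; ring
          · obtain ⟨i, hi, hEq⟩ := minOn_mem T hA ω
            rw [← claim (minLifeOn T A ω) ⟨i, hEq⟩]
            congr 1
            exact if_congr eq_comm rfl rfl

end Key

lemma vanishing {Ω : Type*} [MeasurableSpace Ω] (μ : MeasureTheory.Measure Ω) {n : ℕ}
    (T : Fin n → Ω → ℝ)
    (hties : ∀ i j : Fin n, i ≠ j → μ {ω | T i ω = T j ω} = 0)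
    (M : Finset (Fin n)) {k : ℕ} (hk1 : 1 ≤ k) (hkm : k ≤ M.card)
    (A : Finset (Fin n)) (hAcard : M.card - k + 1 < (M ∩ A).card) :
    μ {ω | orderStat T M k ω = minLifeOn T A ω} = 0 := by
  classical
  have hnull : μ (⋃ (i : Fin n) (j : Fin n) (_ : i ≠ j), {ω | T i ω = T j ω}) = 0 :=
    measure_iUnion_null fun i => measure_iUnion_null fun j =>
      measure_iUnion_null fun h => hties i j h
  refine measure_mono_null ?_ hnull
  intro ω hω
  simp only [Set.mem_setOf_eq] at hω
  simp only [Set.mem_iUnion]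
  have hMA : (M ∩ A).Nonempty := Finset.card_pos.1 (by omega)
  have hA : A.Nonempty := hMA.mono Finset.inter_subset_right
  have hle : ∀ i ∈ A, orderStat T M k ω ≤ T i ω := by
    intro i hi
    rw [hω, minLifeOn, dif_pos hA]
    exact Finset.inf'_le _ hi
  obtain ⟨i₀, hi₀M, hi₀⟩ := orderStat_mem T M hk1 hkm ω
  set F := M.filter (fun i => T i ω ≤ orderStat T M k ω) with hFdef
  have hkF : k ≤ F.card := (orderStat_le_iff T M hk1 hkm ω _).1 le_rfl
  by_cases hex : ∃ i ∈ (M ∩ A) ∩ F, i ≠ i₀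
  · obtain ⟨i, hi, hne⟩ := hex
    refine ⟨i, i₀, hne, ?_⟩
    simp only [Finset.mem_inter] at hi
    have h1 : orderStat T M k ω ≤ T i ω := hle i hi.1.2
    have h2 : T i ω ≤ orderStat T M k ω := (Finset.mem_filter.1 hi.2).2
    show T i ω = T i₀ ω
    rw [← hi₀]
    exact le_antisymm h2 h1
  · push_neg at hex
    exfalso
    have hsub : (M ∩ A) ∩ F ⊆ {i₀} := fun i hi => Finset.mem_singleton.2 (hex i hi)
    have hcard1 : ((M ∩ A) ∩ F).card ≤ 1 :=
      le_trans (Finset.card_le_card hsub) (by simp)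
    have hcard2 : ((M ∩ A) ∪ F).card ≤ M.card :=
      Finset.card_le_card
        (Finset.union_subset Finset.inter_subset_left (Finset.filter_subset _ _))
    have hu := Finset.card_union_add_card_inter (M ∩ A) F
    omega

theorem stmt_5 {Ω : Type*} [MeasurableSpace Ω] (μ : Measure Ω) [IsProbabilityMeasure μ]
    {n : ℕ} (T : Fin n → Ω → ℝ) (hTmeas : ∀ i, Measurable (T i))
    (hTnonneg : ∀ i ω, 0 ≤ T i ω)
    (hties : ∀ i j : Fin n, i ≠ j → μ {ω | T i ω = T j ω} = 0)
    (φ : Finset (Fin n) → ℝ)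
    (hφ01 : ∀ A, φ A = 0 ∨ φ A = 1)
    (hφmono : ∀ A B : Finset (Fin n), A ⊆ B → φ A ≤ φ B)
    (hφempty : φ ∅ = 0) (hφfull : φ Finset.univ = 1)
    (M : Finset (Fin n)) (hM : M.Nonempty) (k : ℕ) (hk1 : 1 ≤ k) (hkm : k ≤ M.card) :
    (μ {ω | sysLifeOn T Finset.univ φ ω = orderStat T M k ω}).toReal =
      ∑ A ∈ (Finset.univ : Finset (Fin n)).powerset.filter
          (fun A => (M ∩ A).card ≤ M.card - k + 1),
        signedDom φ A * (μ {ω | orderStat T M k ω = minLifeOn T A ω}).toReal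
    ∧
    (μ {ω | sysLifeOn T Finset.univ φ ω = orderStat T M k ω}).toReal =
      ∑ A ∈ (Finset.univ : Finset (Fin n)).powerset,
        signedDom φ A * (μ {ω | orderStat T M k ω = minLifeOn T A ω}).toReal := by
  classical
  have hmord : Measurable (orderStat T M k) := measurable_orderStat T M hTmeas hk1 hkm
  have hmsys : Measurable (sysLifeOn T Finset.univ φ) := measurable_sysLifeOn T φ hTmeas _
  have hmE : MeasurableSet {ω | sysLifeOn T Finset.univ φ ω = orderStat T M k ω} :=
    measurableSet_eq_fun hmsys hmord
  have hmEA : ∀ A : Finset (Fin n), MeasurableSet {ω | orderStat T M k ω = minLifeOn T A ω} :=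
    fun A => measurableSet_eq_fun hmord (measurable_minOn T hTmeas A)
  have h2 : (μ {ω | sysLifeOn T Finset.univ φ ω = orderStat T M k ω}).toReal
      = ∑ A ∈ (Finset.univ : Finset (Fin n)).powerset,
          signedDom φ A * (μ {ω | orderStat T M k ω = minLifeOn T A ω}).toReal := by
    rw [← measureReal_def, ← integral_indicator_one hmE]
    have hpt : ∀ ω : Ω, Set.indicator {ω | sysLifeOn T Finset.univ φ ω = orderStat T M k ω}
        (1 : Ω → ℝ) ω
        = ∑ A ∈ (Finset.univ : Finset (Fin n)).powerset,
            signedDom φ A *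
              Set.indicator {ω | orderStat T M k ω = minLifeOn T A ω} (1 : Ω → ℝ) ω := by
      intro ω
      have hk := pointwise_key T φ hφ01 hφmono hφempty hφfull M hk1 hkm ω
      simpa [Set.indicator_apply] using hk
    calc ∫ ω, Set.indicator {ω | sysLifeOn T Finset.univ φ ω = orderStat T M k ω}
            (1 : Ω → ℝ) ω ∂μ
        = ∫ ω, ∑ A ∈ (Finset.univ : Finset (Fin n)).powerset,
            signedDom φ A *
              Set.indicator {ω | orderStat T M k ω = minLifeOn T A ω} (1 : Ω → ℝ) ω ∂μ := by
          congr 1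
          funext ω
          exact hpt ω
      _ = ∑ A ∈ (Finset.univ : Finset (Fin n)).powerset,
            ∫ ω, signedDom φ A *
              Set.indicator {ω | orderStat T M k ω = minLifeOn T A ω} (1 : Ω → ℝ) ω ∂μ := by
          refine integral_finset_sum _ fun A _ => ?_
          exact ((integrable_const (1 : ℝ)).indicator (hmEA A)).const_mul _
      _ = ∑ A ∈ (Finset.univ : Finset (Fin n)).powerset,
            signedDom φ A * (μ {ω | orderStat T M k ω = minLifeOn T A ω}).toReal := by
          refine Finset.sum_congr rfl fun A _ => ?_
          rw [MeasureTheory.integral_const_mul, integral_indicator_one (hmEA A), measureReal_def]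
  refine ⟨?_, h2⟩
  rw [h2]
  refine (Finset.sum_subset (Finset.filter_subset _ _) ?_).symm
  intro A hA hA'
  have hnot : ¬ (M ∩ A).card ≤ M.card - k + 1 := fun hc => hA' (Finset.mem_filter.2 ⟨hA, hc⟩)
  have hz := vanishing μ T hties M hk1 hkm A (not_le.1 hnot)
  rw [hz]
  simp
end

section
/- For every k ∈ {1,…,n}, the k-th coordinate of the probability signature satisfies p_k = ∑_{A⊆C} d(A)·Pr(T_{k:n} = min_{i∈A} T_i), where T_{k:n} is the k-th order statistic of all n component lifetimes. -/
open MeasureTheory Finset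

/-- `min_{i ∈ A} T i` (with junk value `0` when `A = ∅`). -/
noncomputable def minOnLife {Ω : Type*} {n : ℕ} (T : Fin n → Ω → ℝ)
    (A : Finset (Fin n)) (ω : Ω) : ℝ :=
  if h : A.Nonempty then A.inf' h fun i => T i ω else 0

/-- The event that `σ` sorts the lifetimes strictly increasingly. -/
def sd6Os {Ω : Type*} {n : ℕ} (T : Fin n → Ω → ℝ) (σ : Equiv.Perm (Fin n)) : Set Ω :=
  {ω | StrictMono fun m => T (σ m) ω}

lemma sd6Os_meas {Ω : Type*} [MeasurableSpace Ω] {n : ℕ} {T : Fin n → Ω → ℝ}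
    (hT : ∀ i, Measurable (T i)) (σ : Equiv.Perm (Fin n)) : MeasurableSet (sd6Os T σ) := by
  have : sd6Os T σ = ⋂ (a : Fin n) (b : Fin n) (_ : a < b), {ω | T (σ a) ω < T (σ b) ω} := by
    ext ω
    simp only [sd6Os, Set.mem_setOf_eq, Set.mem_iInter]
    exact ⟨fun h a b hab => h hab, fun h a b hab => h a b hab⟩
  rw [this]
  exact MeasurableSet.iInter fun a => MeasurableSet.iInter fun b =>
    MeasurableSet.iInter fun _ => measurableSet_lt (hT _) (hT _)

lemma sd6Os_inj {Ω : Type*} {n : ℕ} {T : Fin n → Ω → ℝ} {σ : Equiv.Perm (Fin n)} {ω : Ω}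
    (hω : ω ∈ sd6Os T σ) : Function.Injective fun i => T i ω := by
  intro i i' h
  have h1 : StrictMono fun m => T (σ m) ω := hω
  have h2 : T (σ (σ.symm i)) ω = T (σ (σ.symm i')) ω := by
    rw [Equiv.apply_symm_apply, Equiv.apply_symm_apply]; exact h
  have := h1.injective h2
  simpa using congrArg σ this

lemma sd6Os_disj {Ω : Type*} {n : ℕ} {T : Fin n → Ω → ℝ} {σ τ : Equiv.Perm (Fin n)}
    (h : σ ≠ τ) : Disjoint (sd6Os T σ) (sd6Os T τ) := by
  rw [Set.disjoint_left]
  intro ω hσ hτ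
  apply h
  have h1 : Monotone ((fun i => T i ω) ∘ σ) := (hσ : StrictMono _).monotone
  have h2 : Monotone ((fun i => T i ω) ∘ τ) := (hτ : StrictMono _).monotone
  have h3 := Tuple.unique_monotone h1 h2
  ext m
  have := congrFun h3 m
  exact congrArg (fun x => (x : Fin n).val) (sd6Os_inj hσ this)

lemma sd6Os_cover {Ω : Type*} {n : ℕ} {T : Fin n → Ω → ℝ} {ω : Ω}
    (hω : Function.Injective fun i => T i ω) : ∃ σ, ω ∈ sd6Os T σ := by
  refine ⟨Tuple.sort (fun i => T i ω), ?_⟩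
  have hm := Tuple.monotone_sort (fun i => T i ω)
  have hi : Function.Injective ((fun i => T i ω) ∘ (Tuple.sort (fun i => T i ω))) :=
    hω.comp (Equiv.injective _)
  exact hm.strictMono_of_injective hi

lemma sd6Os_null {Ω : Type*} [MeasurableSpace Ω] (μ : Measure Ω) {n : ℕ}
    {T : Fin n → Ω → ℝ} (hties : ∀ i j : Fin n, i ≠ j → μ {ω | T i ω = T j ω} = 0) :
    μ (⋃ σ : Equiv.Perm (Fin n), sd6Os T σ)ᶜ = 0 := by
  have hsub : (⋃ σ : Equiv.Perm (Fin n), sd6Os T σ)ᶜ ⊆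
      ⋃ (p : Fin n × Fin n) (_ : p.1 ≠ p.2), {ω | T p.1 ω = T p.2 ω} := by
    intro ω hω
    by_contra hn
    simp only [Set.mem_iUnion, not_exists, Set.mem_setOf_eq] at hn
    have hinj : Function.Injective fun i => T i ω := by
      intro i i' h
      by_contra hne
      exact hn (i, i') hne h
    obtain ⟨σ, hσ⟩ := sd6Os_cover hinj
    exact hω (Set.mem_iUnion.2 ⟨σ, hσ⟩)
  refine measure_mono_null hsub (measure_iUnion_null fun p => measure_iUnion_null fun hp => ?_)
  exact hties _ _ hp

/-- On the sorted event, the `k`-th order statistic is `T (σ kk)`. -/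
lemma sd6_orderStat {Ω : Type*} {n : ℕ} {T : Fin n → Ω → ℝ} {σ : Equiv.Perm (Fin n)} {ω : Ω}
    (hω : ω ∈ sd6Os T σ) {k : ℕ} (hk : k - 1 < n) :
    orderStat T Finset.univ k ω = T (σ ⟨k - 1, hk⟩) ω := by
  have hsm : StrictMono fun m => T (σ m) ω := hω
  have hL : (Multiset.sort (Finset.univ.val.map fun i => T i ω) (· ≤ ·))
      = List.ofFn fun m => T (σ m) ω := by
    refine (fun hp h1 h2 => List.Perm.eq_of_pairwise' (r := (· ≤ · : ℝ → ℝ → Prop)) h1 h2 hp) ?_ ?_ ?_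
    · rw [← Multiset.coe_eq_coe, Multiset.sort_eq]
      have h1 : (Multiset.map (σ : Fin n → Fin n) Finset.univ.val) = Finset.univ.val :=
        Multiset.map_univ_val_equiv σ
      calc Finset.univ.val.map (fun i => T i ω)
          = (Multiset.map (σ : Fin n → Fin n) Finset.univ.val).map (fun i => T i ω) := by
            rw [h1]
        _ = Finset.univ.val.map (fun m => T (σ m) ω) := by rw [Multiset.map_map]; rfl
        _ = ↑(List.ofFn fun m => T (σ m) ω) := Fin.univ_val_map _
    · exact Multiset.pairwise_sort _ _
    · exact (List.sortedLE_ofFn_iff.2 hsm.monotone).pairwise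
  have hlen : k - 1 < (List.ofFn fun m => T (σ m) ω).length := by
    rw [List.length_ofFn]; exact hk
  rw [orderStat, hL, List.getD_eq_getElem _ _ hlen, List.getElem_ofFn]

/-- Minimal position (in the sorted order given by `σ`) of elements of `A`. -/
noncomputable def sd6pm {n : ℕ} [NeZero n] (σ : Equiv.Perm (Fin n)) (A : Finset (Fin n)) :
    Fin n :=
  if h : A.Nonempty then A.inf' h (fun i => σ.symm i) else default

lemma sd6_inf' {Ω : Type*} {n : ℕ} [NeZero n] {T : Fin n → Ω → ℝ} {σ : Equiv.Perm (Fin n)}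
    {ω : Ω} (hω : ω ∈ sd6Os T σ) {A : Finset (Fin n)} (hA : A.Nonempty) :
    A.inf' hA (fun i => T i ω) = T (σ (sd6pm σ A)) ω := by
  have hsm : StrictMono fun m => T (σ m) ω := hω
  rw [sd6pm, dif_pos hA]
  have h1 : A.inf' hA (fun i => T i ω)
      = A.inf' hA (fun i => (fun m => T (σ m) ω) (σ.symm i)) :=
    Finset.inf'_congr hA rfl (fun i _ => by simp)
  rw [h1]
  exact (Finset.apply_inf'_eq_inf'_comp hA (fun m => T (σ m) ω)
    (fun x y => by simpa using hsm.monotone.map_min (a := x) (b := y))).symm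

lemma sd6_minOn {Ω : Type*} {n : ℕ} [NeZero n] {T : Fin n → Ω → ℝ} {σ : Equiv.Perm (Fin n)}
    {ω : Ω} (hω : ω ∈ sd6Os T σ) {A : Finset (Fin n)} (hA : A.Nonempty) :
    minOnLife T A ω = T (σ (sd6pm σ A)) ω := by
  rw [minOnLife, dif_pos hA]; exact sd6_inf' hω hA

lemma sd6_sysLifeOn {Ω : Type*} {n : ℕ} [NeZero n] {T : Fin n → Ω → ℝ} {σ : Equiv.Perm (Fin n)}
    {ω : Ω} (hω : ω ∈ sd6Os T σ) {φ : Finset (Fin n) → ℝ}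
    (hF : (Finset.univ.powerset.filter fun A => φ A = (1:ℝ)).Nonempty)
    (hFne : ∀ A ∈ Finset.univ.powerset.filter fun A => φ A = (1:ℝ), A.Nonempty) :
    sysLifeOn T Finset.univ φ ω
      = T (σ ((Finset.univ.powerset.filter fun A => φ A = (1:ℝ)).sup' hF (sd6pm σ))) ω := by
  have hsm : StrictMono fun m => T (σ m) ω := hω
  rw [sysLifeOn, dif_pos hF]
  have h1 : (Finset.univ.powerset.filter fun A => φ A = (1:ℝ)).sup' hF
        (fun A => if hA : A.Nonempty then A.inf' hA fun i => T i ω else 0)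
      = (Finset.univ.powerset.filter fun A => φ A = (1:ℝ)).sup' hF
        (fun A => (fun m => T (σ m) ω) (sd6pm σ A)) := by
    refine Finset.sup'_congr hF rfl (fun A hA => ?_)
    rw [dif_pos (hFne A hA)]
    exact sd6_inf' hω (hFne A hA)
  rw [h1]
  exact (Finset.comp_sup'_eq_sup'_comp hF (fun m => T (σ m) ω)
    (fun x y => by simpa using hsm.monotone.map_max (a := x) (b := y))).symm

lemma sd6_pm_eq_iff {n : ℕ} [NeZero n] (σ : Equiv.Perm (Fin n)) {A : Finset (Fin n)}
    (hA : A.Nonempty) (kk : Fin n) :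
    sd6pm σ A = kk ↔ (σ kk ∈ A ∧ ∀ i ∈ A, kk ≤ σ.symm i) := by
  rw [sd6pm, dif_pos hA]
  constructor
  · intro h
    obtain ⟨i, hi, hEq⟩ := Finset.exists_mem_eq_inf' hA (fun i => σ.symm i)
    constructor
    · have h1 : σ.symm i = kk := by rw [← hEq, h]
      have h2 : i = σ kk := by
        have := congrArg σ h1
        rwa [Equiv.apply_symm_apply] at this
      exact h2 ▸ hi
    · intro i hi
      rw [← h]
      exact Finset.inf'_le _ hi
  · rintro ⟨hj, hsub⟩
    refine le_antisymm ?_ (Finset.le_inf' hA _ hsub)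
    have := Finset.inf'_le (fun i => σ.symm i) hj
    rwa [Equiv.symm_apply_apply] at this

lemma sd6_Sx_eq_iff {n : ℕ} [NeZero n] {φ : Finset (Fin n) → ℝ}
    (hφ01 : ∀ A, φ A = 0 ∨ φ A = 1)
    (hφmono : ∀ A B : Finset (Fin n), A ⊆ B → φ A ≤ φ B) (hφempty : φ ∅ = 0)
    (hF : (Finset.univ.powerset.filter fun A => φ A = (1:ℝ)).Nonempty)
    (σ : Equiv.Perm (Fin n)) (kk : Fin n) :
    ((Finset.univ.powerset.filter fun A => φ A = (1:ℝ)).sup' hF (sd6pm σ) = kk)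
      ↔ (φ (Finset.univ.filter fun i => kk ≤ σ.symm i) = 1 ∧
         φ ((Finset.univ.filter fun i => kk ≤ σ.symm i).erase (σ kk)) = 0) := by
  classical
  set U := Finset.univ.filter fun i : Fin n => kk ≤ σ.symm i with hU
  have hFne : ∀ A ∈ Finset.univ.powerset.filter fun A => φ A = (1:ℝ), A.Nonempty := by
    intro A hA
    rcases A.eq_empty_or_nonempty with rfl | h
    · exact absurd ((Finset.mem_filter.1 hA).2) (by rw [hφempty]; exact zero_ne_one)
    · exact h
  have hjU : σ kk ∈ U := by simp [hU]
  have h1 : kk ≤ (Finset.univ.powerset.filter fun A => φ A = (1:ℝ)).sup' hF (sd6pm σ)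
      ↔ φ U = 1 := by
    rw [Finset.le_sup'_iff]
    constructor
    · rintro ⟨A, hA, hle⟩
      have hAne := hFne A hA
      have hφA : φ A = 1 := (Finset.mem_filter.1 hA).2
      have hsub : A ⊆ U := by
        intro i hi
        simp only [hU, Finset.mem_filter]
        refine ⟨Finset.mem_univ _, ?_⟩
        rw [sd6pm, dif_pos hAne, Finset.le_inf'_iff] at hle
        exact hle i hi
      have hmm := hφmono A U hsub
      rcases hφ01 U with h | h
      · exfalso; rw [hφA, h] at hmm; linarith
      · exact h
    · intro hUφ
      refine ⟨U, Finset.mem_filter.2 ⟨Finset.mem_powerset.2 (Finset.subset_univ _), hUφ⟩, ?_⟩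
      have hUne : U.Nonempty := ⟨σ kk, hjU⟩
      rw [sd6pm, dif_pos hUne, Finset.le_inf'_iff]
      intro i hi
      rw [hU, Finset.mem_filter] at hi
      exact hi.2
  have h2 : kk < (Finset.univ.powerset.filter fun A => φ A = (1:ℝ)).sup' hF (sd6pm σ)
      ↔ φ (U.erase (σ kk)) = 1 := by
    rw [Finset.lt_sup'_iff]
    constructor
    · rintro ⟨A, hA, hlt⟩
      have hAne := hFne A hA
      have hφA : φ A = 1 := (Finset.mem_filter.1 hA).2
      rw [sd6pm, dif_pos hAne, Finset.lt_inf'_iff] at hlt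
      have hsub : A ⊆ U.erase (σ kk) := by
        intro i hi
        rw [Finset.mem_erase]
        constructor
        · rintro rfl
          have := hlt _ hi
          simp at this
        · simp only [hU, Finset.mem_filter]
          exact ⟨Finset.mem_univ _, (hlt i hi).le⟩
      have hmm := hφmono _ _ hsub
      rcases hφ01 (U.erase (σ kk)) with h | h
      · exfalso; rw [hφA, h] at hmm; linarith
      · exact h
    · intro hφe
      have hne : (U.erase (σ kk)).Nonempty := by
        rcases (U.erase (σ kk)).eq_empty_or_nonempty with h | h
        · exact absurd hφe (by rw [h, hφempty]; exact zero_ne_one)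
        · exact h
      refine ⟨U.erase (σ kk),
        Finset.mem_filter.2 ⟨Finset.mem_powerset.2 (Finset.subset_univ _), hφe⟩, ?_⟩
      rw [sd6pm, dif_pos hne, Finset.lt_inf'_iff]
      intro i hi
      rw [Finset.mem_erase] at hi
      have ha : kk ≤ σ.symm i := by
        have := hi.2; rw [hU, Finset.mem_filter] at this; exact this.2
      have hb : σ.symm i ≠ kk := by
        intro h
        apply hi.1
        have := congrArg σ h
        rwa [Equiv.apply_symm_apply] at this
      exact lt_of_le_of_ne ha (Ne.symm hb)
  constructor
  · intro h
    refine ⟨h1.1 (le_of_eq h.symm), ?_⟩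
    rcases hφ01 (U.erase (σ kk)) with he | he
    · exact he
    · exfalso
      have := h2.2 he
      rw [h] at this
      exact lt_irrefl _ this
  · rintro ⟨hU1, hU0⟩
    have hle : kk ≤ _ := h1.2 hU1
    have hnlt : ¬ kk < (Finset.univ.powerset.filter fun A => φ A = (1:ℝ)).sup' hF (sd6pm σ) := by
      intro hc
      rw [h2, hU0] at hc
      exact zero_ne_one hc
    exact le_antisymm (not_lt.1 hnlt) hle

lemma sd6_measure_decomp {Ω : Type*} [MeasurableSpace Ω] (μ : Measure Ω)
    [IsProbabilityMeasure μ] {n : ℕ} {T : Fin n → Ω → ℝ} (hT : ∀ i, Measurable (T i))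
    (hties : ∀ i j : Fin n, i ≠ j → μ {ω | T i ω = T j ω} = 0)
    (s : Set Ω) (e : Equiv.Perm (Fin n) → Prop) [DecidablePred e]
    (h : ∀ σ, s ∩ sd6Os T σ = if e σ then sd6Os T σ else ∅) :
    (μ s).toReal
      = ∑ σ : Equiv.Perm (Fin n), (if e σ then (μ (sd6Os T σ)).toReal else 0) := by
  have h0 : μ s = μ (s ∩ ⋃ σ : Equiv.Perm (Fin n), sd6Os T σ) :=
    (measure_inter_conull (sd6Os_null μ hties)).symm
  rw [h0, Set.inter_iUnion, measure_iUnion ?hd ?hm]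
  · rw [tsum_fintype, ENNReal.toReal_sum (fun σ _ => measure_ne_top μ _)]
    refine Finset.sum_congr rfl fun σ _ => ?_
    rw [h σ]
    split_ifs with hh
    · rfl
    · simp
  case hd =>
    intro σ τ hst
    exact (sd6Os_disj hst).mono Set.inter_subset_right Set.inter_subset_right
  case hm =>
    intro σ
    rw [h σ]
    split_ifs
    · exact sd6Os_meas hT σ
    · exact MeasurableSet.empty

lemma sd6_mobius {n : ℕ} (φ : Finset (Fin n) → ℝ) (W : Finset (Fin n)) :
    ∑ B ∈ W.powerset, signedDom φ B = φ W := by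
  classical
  simp only [signedDom]
  rw [Finset.sum_comm' (t' := W.powerset)
      (s' := fun C => W.powerset.filter fun B => C ⊆ B)
      (fun B C => by
        simp only [Finset.mem_powerset, Finset.mem_filter, Finset.mem_powerset]
        exact ⟨fun ⟨h1, h2⟩ => ⟨⟨h1, h2⟩, h2.trans h1⟩, fun ⟨⟨h1, h2⟩, _⟩ => ⟨h1, h2⟩⟩)]
  have hinner : ∀ C ∈ W.powerset,
      (∑ B ∈ W.powerset.filter fun B => C ⊆ B, (-1:ℝ) ^ (B.card - C.card) * φ C)
        = (if C = W then (1:ℝ) else 0) * φ C := by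
    intro C hC
    rw [← Finset.sum_mul]
    congr 1
    have hCW : C ⊆ W := Finset.mem_powerset.1 hC
    have hb : (∑ B ∈ W.powerset.filter fun B => C ⊆ B, (-1:ℝ) ^ (B.card - C.card))
        = ∑ D ∈ (W \ C).powerset, (-1:ℝ) ^ D.card := by
      refine Finset.sum_nbij' (fun B => B \ C) (fun D => D ∪ C) ?_ ?_ ?_ ?_ ?_
      · intro B hB
        simp only [Finset.mem_filter, Finset.mem_powerset] at hB ⊢
        exact Finset.sdiff_subset_sdiff hB.1 (le_refl C)
      · intro D hD
        simp only [Finset.mem_filter, Finset.mem_powerset] at hD ⊢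
        exact ⟨Finset.union_subset (hD.trans (Finset.sdiff_subset)) hCW,
          Finset.subset_union_right⟩
      · intro B hB
        simp only [Finset.mem_filter, Finset.mem_powerset] at hB
        exact Finset.sdiff_union_of_subset hB.2
      · intro D hD
        simp only [Finset.mem_powerset] at hD
        have hdisj : Disjoint D C := Finset.disjoint_of_subset_left hD Finset.sdiff_disjoint
        rw [Finset.union_sdiff_cancel_right hdisj]
      · intro B hB
        simp only [Finset.mem_filter, Finset.mem_powerset] at hB
        rw [Finset.card_sdiff_of_subset hB.2]
    rw [hb]
    have hz := Finset.sum_powerset_neg_one_pow_card (x := W \ C)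
    have hzz : (∑ D ∈ (W \ C).powerset, (-1:ℝ) ^ D.card)
        = ((∑ D ∈ (W \ C).powerset, (-1:ℤ) ^ D.card : ℤ) : ℝ) := by push_cast; rfl
    rw [hzz, hz]
    by_cases h : W \ C = ∅
    · have : C = W := le_antisymm hCW (Finset.sdiff_eq_empty_iff_subset.mp h)
      simp [h, this]
    · have : ¬ C = W := by rintro rfl; simp at h
      simp [h, this]
  rw [Finset.sum_congr rfl hinner]
  simp only [ite_mul, one_mul, zero_mul]
  rw [Finset.sum_ite_eq' W.powerset W φ]
  simp

lemma sd6_sum_mem {n : ℕ} (φ : Finset (Fin n) → ℝ) {U : Finset (Fin n)} {j : Fin n} (hj : j ∈ U) :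
    ∑ A ∈ U.powerset.filter (fun A => j ∈ A), signedDom φ A = φ U - φ (U.erase j) := by
  classical
  have h1 := Finset.sum_filter_add_sum_filter_not U.powerset (fun A => j ∈ A) (signedDom φ)
  have h2 : U.powerset.filter (fun A => ¬ j ∈ A) = (U.erase j).powerset := by
    ext A
    simp [Finset.subset_erase, and_comm]
  rw [h2, sd6_mobius, sd6_mobius] at h1
  linarith

theorem stmt_6 {Ω : Type*} [MeasurableSpace Ω] (μ : Measure Ω) [IsProbabilityMeasure μ]
    {n : ℕ} (T : Fin n → Ω → ℝ) (hTmeas : ∀ i, Measurable (T i))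
    (hTnonneg : ∀ i ω, 0 ≤ T i ω)
    (hties : ∀ i j : Fin n, i ≠ j → μ {ω | T i ω = T j ω} = 0)
    (φ : Finset (Fin n) → ℝ)
    (hφ01 : ∀ A, φ A = 0 ∨ φ A = 1)
    (hφmono : ∀ A B : Finset (Fin n), A ⊆ B → φ A ≤ φ B)
    (hφempty : φ ∅ = 0) (hφfull : φ Finset.univ = 1)
    (k : ℕ) (hk1 : 1 ≤ k) (hkn : k ≤ n) :
    (μ {ω | sysLifeOn T Finset.univ φ ω = orderStat T Finset.univ k ω}).toReal =
      ∑ A ∈ (Finset.univ : Finset (Fin n)).powerset,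
        signedDom φ A * (μ {ω | orderStat T Finset.univ k ω = minOnLife T A ω}).toReal := by
  classical
  haveI : NeZero n := ⟨by omega⟩
  have hkn' : k - 1 < n := by omega
  have hF : (Finset.univ.powerset.filter fun A => φ A = (1:ℝ)).Nonempty :=
    ⟨Finset.univ, Finset.mem_filter.2 ⟨Finset.mem_powerset.2 (Finset.subset_univ _), hφfull⟩⟩
  have hFne : ∀ A ∈ Finset.univ.powerset.filter fun A => φ A = (1:ℝ), A.Nonempty := by
    intro A hA
    rcases A.eq_empty_or_nonempty with rfl | h
    · exact absurd ((Finset.mem_filter.1 hA).2) (by rw [hφempty]; exact zero_ne_one)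
    · exact h
  set kk : Fin n := ⟨k - 1, hkn'⟩ with hkkdef
  -- intersections with the sorted events
  have hinj : ∀ (σ : Equiv.Perm (Fin n)) (ω : Ω), ω ∈ sd6Os T σ →
      ∀ a b : Fin n, T (σ a) ω = T (σ b) ω → a = b := by
    intro σ ω hω a b hab
    exact (hω : StrictMono fun m => T (σ m) ω).injective hab
  have hEcap : ∀ σ : Equiv.Perm (Fin n),
      {ω | sysLifeOn T Finset.univ φ ω = orderStat T Finset.univ k ω} ∩ sd6Os T σ
        = if (Finset.univ.powerset.filter fun A => φ A = (1:ℝ)).sup' hF (sd6pm σ) = kk then sd6Os T σ else ∅ := by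
    intro σ
    split_ifs with hS
    · ext ω
      simp only [Set.mem_inter_iff, Set.mem_setOf_eq, and_iff_right_iff_imp]
      intro hω
      rw [sd6_sysLifeOn hω hF hFne, sd6_orderStat hω hkn', ← hkkdef, hS]
    · ext ω
      simp only [Set.mem_inter_iff, Set.mem_setOf_eq, Set.mem_empty_iff_false, iff_false,
        not_and]
      intro heq hω
      apply hS
      rw [sd6_sysLifeOn hω hF hFne, sd6_orderStat hω hkn'] at heq
      rw [hkkdef]
      exact hinj σ ω hω _ _ heq
  have hFcap : ∀ (A : Finset (Fin n)), A.Nonempty → ∀ σ : Equiv.Perm (Fin n),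
      {ω | orderStat T Finset.univ k ω = minOnLife T A ω} ∩ sd6Os T σ
        = if sd6pm σ A = kk then sd6Os T σ else ∅ := by
    intro A hA σ
    split_ifs with hS
    · ext ω
      simp only [Set.mem_inter_iff, Set.mem_setOf_eq, and_iff_right_iff_imp]
      intro hω
      rw [sd6_minOn hω hA, sd6_orderStat hω hkn', ← hkkdef, hS]
    · ext ω
      simp only [Set.mem_inter_iff, Set.mem_setOf_eq, Set.mem_empty_iff_false, iff_false,
        not_and]
      intro heq hω
      apply hS
      rw [sd6_minOn hω hA, sd6_orderStat hω hkn'] at heq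
      rw [hkkdef]
      exact (hinj σ ω hω _ _ heq).symm
  -- decompose the left-hand side
  have hLHS := sd6_measure_decomp μ hTmeas hties
    {ω | sysLifeOn T Finset.univ φ ω = orderStat T Finset.univ k ω}
    (fun σ => (Finset.univ.powerset.filter fun A => φ A = (1:ℝ)).sup' hF (sd6pm σ) = kk) hEcap
  -- decompose each right-hand term
  have hterm : ∀ A ∈ (Finset.univ : Finset (Fin n)).powerset,
      signedDom φ A * (μ {ω | orderStat T Finset.univ k ω = minOnLife T A ω}).toReal
        = ∑ σ : Equiv.Perm (Fin n), signedDom φ A *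
            (if A.Nonempty ∧ sd6pm σ A = kk then (μ (sd6Os T σ)).toReal else 0) := by
    intro A _
    rcases A.eq_empty_or_nonempty with rfl | hA
    · have hd0 : signedDom φ (∅ : Finset (Fin n)) = 0 := by
        simp [signedDom, hφempty]
      simp [hd0]
    · rw [← Finset.mul_sum]
      congr 1
      rw [sd6_measure_decomp μ hTmeas hties
        {ω | orderStat T Finset.univ k ω = minOnLife T A ω}
        (fun σ => sd6pm σ A = kk) (hFcap A hA)]
      refine Finset.sum_congr rfl fun σ _ => ?_
      simp [hA]
  -- the per-permutation combinatorial identity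
  have hper : ∀ σ : Equiv.Perm (Fin n),
      (∑ A ∈ (Finset.univ : Finset (Fin n)).powerset, signedDom φ A *
          (if A.Nonempty ∧ sd6pm σ A = kk then (μ (sd6Os T σ)).toReal else 0))
        = (if (Finset.univ.powerset.filter fun A => φ A = (1:ℝ)).sup' hF (sd6pm σ) = kk then (μ (sd6Os T σ)).toReal else 0) := by
    intro σ
    have hjU : σ kk ∈ Finset.univ.filter fun i : Fin n => kk ≤ σ.symm i := by simp
    have hstep : ∀ A ∈ (Finset.univ : Finset (Fin n)).powerset,
        signedDom φ A * (if A.Nonempty ∧ sd6pm σ A = kk then (μ (sd6Os T σ)).toReal else 0)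
          = (if σ kk ∈ A ∧ A ⊆ (Finset.univ.filter fun i : Fin n => kk ≤ σ.symm i)
              then signedDom φ A * (μ (sd6Os T σ)).toReal else 0) := by
      intro A _
      by_cases hA : A.Nonempty
      · by_cases hc : σ kk ∈ A ∧ A ⊆ (Finset.univ.filter fun i : Fin n => kk ≤ σ.symm i)
        · have hpm : sd6pm σ A = kk := (sd6_pm_eq_iff σ hA kk).2
            ⟨hc.1, fun i hi => (Finset.mem_filter.1 (hc.2 hi)).2⟩
          rw [if_pos ⟨hA, hpm⟩, if_pos hc]
        · have hnc : ¬(A.Nonempty ∧ sd6pm σ A = kk) := by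
            rintro ⟨-, hpm⟩
            obtain ⟨hj, hall⟩ := (sd6_pm_eq_iff σ hA kk).1 hpm
            exact hc ⟨hj, fun i hi => Finset.mem_filter.2 ⟨Finset.mem_univ _, hall i hi⟩⟩
          rw [if_neg hnc, if_neg hc, mul_zero]
      · have hAe : A = ∅ := Finset.not_nonempty_iff_eq_empty.1 hA
        have hnc : ¬(A.Nonempty ∧ sd6pm σ A = kk) := fun h => hA h.1
        rw [if_neg hnc, mul_zero, if_neg]
        rintro ⟨hj, -⟩
        rw [hAe] at hj
        exact absurd hj (Finset.notMem_empty _)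
    rw [Finset.sum_congr rfl hstep, ← Finset.sum_filter]
    have hflt : (Finset.univ : Finset (Fin n)).powerset.filter
          (fun A => σ kk ∈ A ∧ A ⊆ (Finset.univ.filter fun i : Fin n => kk ≤ σ.symm i))
        = (Finset.univ.filter fun i : Fin n => kk ≤ σ.symm i).powerset.filter
            (fun A => σ kk ∈ A) := by
      ext A
      simp only [Finset.mem_filter, Finset.mem_powerset]
      exact ⟨fun h => ⟨h.2.2, h.2.1⟩, fun h => ⟨Finset.subset_univ _, h.2, h.1⟩⟩
    rw [hflt, ← Finset.sum_mul, sd6_sum_mem φ hjU]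
    have hSiff := sd6_Sx_eq_iff hφ01 hφmono hφempty hF σ kk
    by_cases h1 : φ (Finset.univ.filter fun i : Fin n => kk ≤ σ.symm i) = 1
    · by_cases h2 : φ ((Finset.univ.filter fun i : Fin n => kk ≤ σ.symm i).erase (σ kk)) = 1
      · have hne : ¬ (Finset.univ.powerset.filter fun A => φ A = (1:ℝ)).sup' hF (sd6pm σ) = kk := by
          intro hc
          have := (hSiff.1 hc).2
          rw [h2] at this
          exact one_ne_zero this
        rw [if_neg hne, h1, h2]
        ring
      · have h2' : φ ((Finset.univ.filter fun i : Fin n => kk ≤ σ.symm i).erase (σ kk)) = 0 :=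
          (hφ01 _).resolve_right h2
        rw [if_pos (hSiff.2 ⟨h1, h2'⟩), h1, h2']
        ring
    · have h1' : φ (Finset.univ.filter fun i : Fin n => kk ≤ σ.symm i) = 0 :=
        (hφ01 _).resolve_right h1
      have h2' : φ ((Finset.univ.filter fun i : Fin n => kk ≤ σ.symm i).erase (σ kk)) = 0 := by
        rcases hφ01 ((Finset.univ.filter fun i : Fin n => kk ≤ σ.symm i).erase (σ kk)) with h | h
        · exact h
        · exfalso
          have := hφmono _ _ (Finset.erase_subset (σ kk)
            (Finset.univ.filter fun i : Fin n => kk ≤ σ.symm i))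
          rw [h, h1'] at this; linarith
      rw [if_neg, h1', h2']
      · ring
      · intro hc
        rw [(hSiff.1 hc).1] at h1'
        exact one_ne_zero h1'
  calc (μ {ω | sysLifeOn T Finset.univ φ ω = orderStat T Finset.univ k ω}).toReal
      = ∑ σ : Equiv.Perm (Fin n), (if (Finset.univ.powerset.filter fun A => φ A = (1:ℝ)).sup' hF (sd6pm σ) = kk then (μ (sd6Os T σ)).toReal else 0) := hLHS
    _ = ∑ σ : Equiv.Perm (Fin n), ∑ A ∈ (Finset.univ : Finset (Fin n)).powerset,
          signedDom φ A * (if A.Nonempty ∧ sd6pm σ A = kk then (μ (sd6Os T σ)).toReal else 0) :=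
        Finset.sum_congr rfl fun σ _ => (hper σ).symm
    _ = ∑ A ∈ (Finset.univ : Finset (Fin n)).powerset, ∑ σ : Equiv.Perm (Fin n),
          signedDom φ A * (if A.Nonempty ∧ sd6pm σ A = kk then (μ (sd6Os T σ)).toReal else 0) :=
        Finset.sum_comm
    _ = ∑ A ∈ (Finset.univ : Finset (Fin n)).powerset,
          signedDom φ A * (μ {ω | orderStat T Finset.univ k ω = minOnLife T A ω}).toReal :=
        (Finset.sum_congr rfl hterm).symm
end
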